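/- arXiv:1101.1159 — 4 statements merged into one kernel-verified Lean document; each statement's English description precedes it below -/
import Mathlib

section
/- Fix ι ∈ {identity, complex conjugation} on ℂ and ε ∈ {1,−1}. Let (V,B) be an H-module with an H-invariant nondegenerate (ι,ε)-symmetric form B. For an irreducible H-module π, let I_{π,π^{ι,*}} denote the sum of all irreducible invariant subspaces of V isomorphic either to π or to π^{ι,*}. Then V is the direct sum of the distinct subspaces I_{π,π^{ι,*}}, these subspaces are pairwise B-orthogonal, and the restriction of B to each I_{π,π^{ι,*}} is nondegenerate. -/
open scoped Classical

variable {H V : Type*}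

/-- `U` is invariant under the representation `ρ`. -/
def Invt [Group H] [AddCommGroup V] [Module ℂ V] (ρ : Representation ℂ H V)
    (U : Submodule ℂ V) : Prop :=
  ∀ (h : H) (v : V), v ∈ U → ρ h v ∈ U

/-- `V` is a semisimple `H`-module. -/
def Semisimple [Group H] [AddCommGroup V] [Module ℂ V] (ρ : Representation ℂ H V) : Prop :=
  ∀ U : Submodule ℂ V, Invt ρ U → ∃ U', Invt ρ U' ∧ IsCompl U U'

/-- `U` is an irreducible invariant subspace. -/
def IrredSub [Group H] [AddCommGroup V] [Module ℂ V] (ρ : Representation ℂ H V)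
    (U : Submodule ℂ V) : Prop :=
  Invt ρ U ∧ U ≠ ⊥ ∧ ∀ U' ≤ U, Invt ρ U' → U' = ⊥ ∨ U' = U

/-- `U` and `W` are isomorphic as `H`-modules. -/
def RepIso [Group H] [AddCommGroup V] [Module ℂ V] (ρ : Representation ℂ H V)
    (U W : Submodule ℂ V) : Prop :=
  ∃ e : U ≃ₗ[ℂ] W, ∀ (h : H) (v : V) (hv : v ∈ U) (hv' : ρ h v ∈ U),
    ((e ⟨ρ h v, hv'⟩ : W) : V) = ρ h ((e ⟨v, hv⟩ : W) : V)

/-- `U` is isomorphic, as an `H`-module, to the `σ`-twisted (conjugate-)dual of `W`. -/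
def RepDualIso [Group H] [AddCommGroup V] [Module ℂ V] (σ : ℂ →+* ℂ)
    (ρ : Representation ℂ H V) (U W : Submodule ℂ V) : Prop :=
  ∃ e : U ≃ₗ[ℂ] (W →ₛₗ[σ] ℂ), ∀ (h : H) (v : V) (hv : v ∈ U) (hv' : ρ h v ∈ U)
    (w : V) (hw : w ∈ W) (hw' : ρ h⁻¹ w ∈ W),
    e ⟨ρ h v, hv'⟩ ⟨w, hw⟩ = e ⟨v, hv⟩ ⟨ρ h⁻¹ w, hw'⟩

section SDual

variable (σ : ℂ →+* ℂ) (M : Type*) [AddCommGroup M] [Module ℂ M] [FiniteDimensional ℂ M]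

noncomputable def sdualMap : (M →ₛₗ[σ] ℂ) →ₗ[ℂ] (Fin (Module.finrank ℂ M) → ℂ) where
  toFun f := fun i => f (Module.finBasis ℂ M i)
  map_add' f g := by ext i; simp
  map_smul' a f := by ext i; simp

lemma sdualMap_bijective : Function.Bijective (sdualMap σ M) := by
  constructor
  · rw [← LinearMap.ker_eq_bot, LinearMap.ker_eq_bot']
    intro f hf
    have hf' : ∀ i, f (Module.finBasis ℂ M i) = 0 := fun i => congrFun hf i
    ext m
    have := (Module.finBasis ℂ M).sum_repr m
    calc f m = f (∑ i, ((Module.finBasis ℂ M).repr m) i • Module.finBasis ℂ M i) := by rw [this]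
    _ = ∑ i, σ (((Module.finBasis ℂ M).repr m) i) • f (Module.finBasis ℂ M i) := by
        rw [map_sum]; exact Finset.sum_congr rfl fun i _ => f.map_smulₛₗ _ _
    _ = 0 := by simp [hf']
  · intro c
    refine ⟨{ toFun := fun m => ∑ i, σ (((Module.finBasis ℂ M).repr m) i) * c i,
              map_add' := ?_, map_smul' := ?_ }, ?_⟩
    · intro x y; simp [map_add, add_mul, Finset.sum_add_distrib]
    · intro a x; simp [map_smul, smul_eq_mul, map_mul, Finset.mul_sum, mul_assoc]
    · ext i
      simp only [sdualMap, LinearMap.coe_mk, AddHom.coe_mk]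
      simp [Module.Basis.repr_self, Finsupp.single_apply, apply_ite σ]

noncomputable def sdualEquiv : (M →ₛₗ[σ] ℂ) ≃ₗ[ℂ] (Fin (Module.finrank ℂ M) → ℂ) :=
  LinearEquiv.ofBijective _ (sdualMap_bijective σ M)

lemma finiteDimensional_sdual : FiniteDimensional ℂ (M →ₛₗ[σ] ℂ) :=
  Module.Finite.equiv (sdualEquiv σ M).symm

lemma finrank_sdual : Module.finrank ℂ (M →ₛₗ[σ] ℂ) = Module.finrank ℂ M := by
  rw [(sdualEquiv σ M).finrank_eq]; simp

lemma sdual_separates {m : M} (h : ∀ f : M →ₛₗ[σ] ℂ, f m = 0) : m = 0 := by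
  rw [← Module.forall_dual_apply_eq_zero_iff ℂ m]
  intro φ
  have := h { toFun := fun x => σ (φ x),
              map_add' := by intro x y; simp,
              map_smul' := by intro a x; simp }
  simpa using σ.injective (by simpa using this)

end SDual

section Rep

variable [Group H] [AddCommGroup V] [Module ℂ V] (ρ : Representation ℂ H V)

lemma rho_inv_apply (h : H) (v : V) : ρ h (ρ h⁻¹ v) = v := by
  rw [← Module.End.mul_apply, ← map_mul, mul_inv_cancel, map_one, Module.End.one_apply]

lemma repIso_refl (U : Submodule ℂ V) : RepIso ρ U U :=
  ⟨LinearEquiv.refl ℂ U, fun _ _ _ _ => rfl⟩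

lemma repIso_symm {U W : Submodule ℂ V} (hU : Invt ρ U) (hiso : RepIso ρ U W) :
    RepIso ρ W U := by
  obtain ⟨e, he⟩ := hiso
  refine ⟨e.symm, fun h w hw hw' => ?_⟩
  set v : U := e.symm ⟨w, hw⟩ with hv
  have h1 : ρ h ↑v ∈ U := hU h _ v.2
  have h2 : (e ⟨ρ h ↑v, h1⟩ : V) = ρ h ↑(e ⟨↑v, v.2⟩) := he h ↑v v.2 h1
  have h3 : e ⟨↑v, v.2⟩ = ⟨w, hw⟩ := by rw [Subtype.coe_eta, hv, e.apply_symm_apply]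
  have h4 : e ⟨ρ h ↑v, h1⟩ = ⟨ρ h w, hw'⟩ := Subtype.ext (by rw [h2, h3])
  calc (e.symm ⟨ρ h w, hw'⟩ : V) = ↑(e.symm (e ⟨ρ h ↑v, h1⟩)) := by rw [h4]
  _ = ρ h ↑(e.symm ⟨w, hw⟩) := by rw [e.symm_apply_apply]

lemma repIso_trans {U W X : Submodule ℂ V} (hW : Invt ρ W)
    (h1 : RepIso ρ U W) (h2 : RepIso ρ W X) : RepIso ρ U X := by
  obtain ⟨e, he⟩ := h1; obtain ⟨g, hg⟩ := h2
  refine ⟨e.trans g, fun h v hv hv' => ?_⟩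
  simp only [LinearEquiv.trans_apply]
  have m1 : ρ h ↑(e ⟨v, hv⟩) ∈ W := hW h _ (e ⟨v, hv⟩).2
  have h3 : e ⟨ρ h v, hv'⟩ = ⟨ρ h ↑(e ⟨v, hv⟩), m1⟩ := Subtype.ext (he h v hv hv')
  calc ((g (e ⟨ρ h v, hv'⟩) : X) : V) = ↑(g ⟨ρ h ↑(e ⟨v, hv⟩), m1⟩) := by rw [h3]
  _ = ρ h ↑(g ⟨↑(e ⟨v, hv⟩), (e ⟨v, hv⟩).2⟩) := hg h _ (e ⟨v, hv⟩).2 m1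
  _ = ρ h ↑(g (e ⟨v, hv⟩)) := by rw [Subtype.coe_eta]

lemma repIso_trans_dual (σ : ℂ →+* ℂ) {U W X : Submodule ℂ V} (hW : Invt ρ W)
    (h1 : RepIso ρ U W) (h2 : RepDualIso σ ρ W X) : RepDualIso σ ρ U X := by
  obtain ⟨e, he⟩ := h1; obtain ⟨f, hf⟩ := h2
  refine ⟨e.trans f, fun h v hv hv' w hw hw' => ?_⟩
  simp only [LinearEquiv.trans_apply]
  have m1 : ρ h ↑(e ⟨v, hv⟩) ∈ W := hW h _ (e ⟨v, hv⟩).2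
  have h3 : e ⟨ρ h v, hv'⟩ = ⟨ρ h ↑(e ⟨v, hv⟩), m1⟩ := Subtype.ext (he h v hv hv')
  rw [h3]
  calc f ⟨ρ h ↑(e ⟨v, hv⟩), m1⟩ ⟨w, hw⟩
      = f ⟨↑(e ⟨v, hv⟩), (e ⟨v, hv⟩).2⟩ ⟨ρ h⁻¹ w, hw'⟩ := hf h _ (e ⟨v, hv⟩).2 m1 w hw hw'
  _ = f (e ⟨v, hv⟩) ⟨ρ h⁻¹ w, hw'⟩ := by rw [Subtype.coe_eta]

noncomputable def compDualEquiv (σ : ℂ →+* ℂ) {Y Z : Type*} [AddCommGroup Y] [Module ℂ Y]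
    [AddCommGroup Z] [Module ℂ Z] (g : Z ≃ₗ[ℂ] Y) :
    (Y →ₛₗ[σ] ℂ) ≃ₗ[ℂ] (Z →ₛₗ[σ] ℂ) where
  toFun φ := φ.comp g.toLinearMap
  invFun φ := φ.comp g.symm.toLinearMap
  map_add' φ ψ := by ext z; simp
  map_smul' a φ := by ext z; simp
  left_inv φ := by ext y; simp
  right_inv φ := by ext z; simp

lemma repDualIso_comp_iso (σ : ℂ →+* ℂ) {U Y Z : Submodule ℂ V} (hY : Invt ρ Y)
    (h1 : RepDualIso σ ρ U Y) (h2 : RepIso ρ Z Y) : RepDualIso σ ρ U Z := by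
  obtain ⟨e, he⟩ := h1; obtain ⟨g, hg⟩ := h2
  refine ⟨e.trans (compDualEquiv σ g), fun h v hv hv' w hw hw' => ?_⟩
  simp only [LinearEquiv.trans_apply]
  show e ⟨ρ h v, hv'⟩ (g ⟨w, hw⟩) = e ⟨v, hv⟩ (g ⟨ρ h⁻¹ w, hw'⟩)
  have m1 : ρ h⁻¹ ↑(g ⟨w, hw⟩) ∈ Y := hY h⁻¹ _ (g ⟨w, hw⟩).2
  have hg1 : g ⟨ρ h⁻¹ w, hw'⟩ = ⟨ρ h⁻¹ ↑(g ⟨w, hw⟩), m1⟩ := Subtype.ext (hg h⁻¹ w hw hw')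
  rw [hg1]
  calc e ⟨ρ h v, hv'⟩ (g ⟨w, hw⟩)
      = e ⟨ρ h v, hv'⟩ ⟨↑(g ⟨w, hw⟩), (g ⟨w, hw⟩).2⟩ := by rw [Subtype.coe_eta]
  _ = e ⟨v, hv⟩ ⟨ρ h⁻¹ ↑(g ⟨w, hw⟩), m1⟩ := he h v hv hv' _ (g ⟨w, hw⟩).2 m1

lemma repIso_of_dualIso_dualIso (σ : ℂ →+* ℂ) {X Y Z : Submodule ℂ V}
    (hY : Invt ρ Y) (hZ : Invt ρ Z)
    (h1 : RepDualIso σ ρ X Y) (h2 : RepDualIso σ ρ Z Y) : RepIso ρ X Z := by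
  obtain ⟨e₁, he₁⟩ := h1; obtain ⟨e₂, he₂⟩ := h2
  refine ⟨e₁.trans e₂.symm, fun h v hv hv' => ?_⟩
  simp only [LinearEquiv.trans_apply]
  set z : Z := e₂.symm (e₁ ⟨v, hv⟩) with hz
  have m1 : ρ h ↑z ∈ Z := hZ h _ z.2
  have key : e₂ ⟨ρ h ↑z, m1⟩ = e₁ ⟨ρ h v, hv'⟩ := by
    apply LinearMap.ext; rintro ⟨y, hy⟩
    have hy' : ρ h⁻¹ y ∈ Y := hY h⁻¹ y hy
    rw [he₂ h ↑z z.2 m1 y hy hy', he₁ h v hv hv' y hy hy', Subtype.coe_eta, hz,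
      e₂.apply_symm_apply]
  have h5 : e₂.symm (e₁ ⟨ρ h v, hv'⟩) = ⟨ρ h ↑z, m1⟩ := by rw [← key, e₂.symm_apply_apply]
  rw [h5]

end Rep

section Pairing

variable [Group H] [AddCommGroup V] [Module ℂ V] (ρ : Representation ℂ H V)

lemma repDualIso_symm [FiniteDimensional ℂ V] (σ : ℂ →+* ℂ) (hσσ : ∀ a, σ (σ a) = a)
    {U W : Submodule ℂ V} (hU : Invt ρ U) (hW : Invt ρ W)
    (hd : RepDualIso σ ρ U W) : RepDualIso σ ρ W U := by
  obtain ⟨e, he⟩ := hd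
  haveI := finiteDimensional_sdual σ ↥U
  haveI := finiteDimensional_sdual σ ↥W
  set F : ↥W →ₗ[ℂ] (↥U →ₛₗ[σ] ℂ) :=
    { toFun := fun w =>
      { toFun := fun u => σ (e u w)
        map_add' := fun u u' => by simp [map_add]
        map_smul' := fun a u => by simp [map_smul, map_mul] }
      map_add' := fun w w' => by ext u; simp [map_add]
      map_smul' := fun a w => by
        ext u
        simp only [LinearMap.coe_mk, AddHom.coe_mk, LinearMap.map_smulₛₗ, smul_eq_mul,
          map_mul, hσσ, RingHom.id_apply, LinearMap.smul_apply] } with hF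
  have hFapp : ∀ (w : ↥W) (u : ↥U), F w u = σ (e u w) := fun w u => rfl
  have hFinj : Function.Injective F := by
    rw [← LinearMap.ker_eq_bot, LinearMap.ker_eq_bot']
    intro w hw0
    have h1 : ∀ u : ↥U, e u w = 0 := by
      intro u
      apply σ.injective
      rw [map_zero, ← hFapp w u, hw0, LinearMap.zero_apply]
    have h2 : ∀ f : ↥W →ₛₗ[σ] ℂ, f w = 0 := by
      intro f
      have h3 : e (e.symm f) w = 0 := h1 _
      rwa [e.apply_symm_apply] at h3
    exact sdual_separates σ ↥W h2
  have hrank : Module.finrank ℂ ↥W = Module.finrank ℂ (↥U →ₛₗ[σ] ℂ) := by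
    rw [finrank_sdual, ← finrank_sdual σ ↥W, ← e.finrank_eq]
  refine ⟨LinearMap.linearEquivOfInjective F hFinj hrank, fun h w hw hw' u hu hu' => ?_⟩
  rw [LinearMap.linearEquivOfInjective_apply, LinearMap.linearEquivOfInjective_apply,
    hFapp, hFapp]
  congr 1
  have h4 : ρ h⁻¹⁻¹ w ∈ W := by rw [inv_inv]; exact hw'
  have h5 := he h⁻¹ u hu hu' w hw h4
  rw [h5]
  congr 2
  rw [inv_inv]

def pairingMap (σ : ℂ →+* ℂ) (B : V → V → ℂ)
    (hB1 : ∀ v v' w, B (v + v') w = B v w + B v' w)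
    (hB2 : ∀ v w w', B v (w + w') = B v w + B v w')
    (hB3 : ∀ (a : ℂ) (v w : V), B (a • v) w = σ a * B v w)
    (hB4 : ∀ (a : ℂ) (v w : V), B v (a • w) = a * B v w)
    (U U' : Submodule ℂ V) : ↥U' →ₗ[ℂ] (↥U →ₛₗ[σ] ℂ) where
  toFun w :=
  { toFun := fun u => B ↑u ↑w
    map_add' := fun u u' => by simpa using hB1 ↑u ↑u' ↑w
    map_smul' := fun a u => by simpa using hB3 a ↑u ↑w }
  map_add' w w' := by ext u; simpa using hB2 ↑u ↑w ↑w'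
  map_smul' a w := by ext u; simpa using hB4 a ↑u ↑w

lemma pairing_shift {B : V → V → ℂ} (hBinv : ∀ (h : H) (v w : V), B (ρ h v) (ρ h w) = B v w)
    (h : H) (u w : V) : B u (ρ h w) = B (ρ h⁻¹ u) w := by
  conv_lhs => rw [← rho_inv_apply ρ h u]
  exact hBinv h _ _

lemma pairingMap_injective (σ : ℂ →+* ℂ) {B : V → V → ℂ}
    {hB1 : ∀ v v' w, B (v + v') w = B v w + B v' w}
    {hB2 : ∀ v w w', B v (w + w') = B v w + B v w'}
    {hB3 : ∀ (a : ℂ) (v w : V), B (a • v) w = σ a * B v w}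
    {hB4 : ∀ (a : ℂ) (v w : V), B v (a • w) = a * B v w}
    (hBinv : ∀ (h : H) (v w : V), B (ρ h v) (ρ h w) = B v w)
    {U U' : Submodule ℂ V} (hUinv : Invt ρ U) (hU' : IrredSub ρ U')
    {v w : V} (hv : v ∈ U) (hw : w ∈ U') (hvw : B v w ≠ 0) :
    Function.Injective (pairingMap σ B hB1 hB2 hB3 hB4 U U') := by
  set ψ := pairingMap σ B hB1 hB2 hB3 hB4 U U' with hψ
  have hψapp : ∀ (x : ↥U') (u : ↥U), ψ x u = B ↑u ↑x := fun _ _ => rfl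
  rw [← LinearMap.ker_eq_bot]
  set K := (LinearMap.ker ψ).map U'.subtype with hK
  have hKle : K ≤ U' := Submodule.map_subtype_le _ _
  have hKinvt : Invt ρ K := by
    intro h x hx
    rw [hK, Submodule.mem_map] at hx ⊢
    obtain ⟨⟨x, hxU'⟩, hxker, rfl⟩ := hx
    refine ⟨⟨ρ h (U'.subtype ⟨x, hxU'⟩), hU'.1 h _ hxU'⟩, ?_, rfl⟩
    rw [LinearMap.mem_ker] at hxker ⊢
    apply LinearMap.ext; rintro ⟨u, hu⟩
    rw [hψapp, LinearMap.zero_apply]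
    show B u (ρ h x) = 0
    rw [pairing_shift ρ hBinv]
    have h6 : ψ ⟨x, hxU'⟩ ⟨ρ h⁻¹ u, hUinv h⁻¹ u hu⟩ = 0 := by rw [hxker]; rfl
    rw [hψapp] at h6
    exact h6
  rcases hU'.2.2 K hKle hKinvt with hbot | htop
  · rw [eq_bot_iff]
    intro x hx
    have h7 : (↑x : V) ∈ K := Submodule.mem_map_of_mem hx
    rw [hbot, Submodule.mem_bot] at h7
    simpa [Submodule.mem_bot] using Subtype.ext h7
  · exfalso
    have h8 : w ∈ K := htop ▸ hw
    rw [hK, Submodule.mem_map] at h8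
    obtain ⟨⟨x, hxU'⟩, hxker, hxe⟩ := h8
    rw [LinearMap.mem_ker] at hxker
    have h9 : ψ ⟨x, hxU'⟩ ⟨v, hv⟩ = 0 := by rw [hxker]; rfl
    rw [hψapp] at h9
    simp only [Submodule.coe_subtype] at hxe
    apply hvw
    rw [← show x = w from hxe]
    exact h9

lemma repDualIso_of_pairing [FiniteDimensional ℂ V] (σ : ℂ →+* ℂ) {B : V → V → ℂ}
    (hB1 : ∀ v v' w, B (v + v') w = B v w + B v' w)
    (hB2 : ∀ v w w', B v (w + w') = B v w + B v w')
    (hB3 : ∀ (a : ℂ) (v w : V), B (a • v) w = σ a * B v w)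
    (hB4 : ∀ (a : ℂ) (v w : V), B v (a • w) = a * B v w)
    (hBinv : ∀ (h : H) (v w : V), B (ρ h v) (ρ h w) = B v w)
    {U U' : Submodule ℂ V} (hU : IrredSub ρ U) (hU' : IrredSub ρ U')
    {v w : V} (hv : v ∈ U) (hw : w ∈ U') (hvw : B v w ≠ 0) (hwv : B w v ≠ 0) :
    RepDualIso σ ρ U' U := by
  haveI := finiteDimensional_sdual σ ↥U
  haveI := finiteDimensional_sdual σ ↥U'
  have hψ : Function.Injective (pairingMap σ B hB1 hB2 hB3 hB4 U U') :=
    pairingMap_injective ρ σ hBinv hU.1 hU' hv hw hvw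
  have hφ : Function.Injective (pairingMap σ B hB1 hB2 hB3 hB4 U' U) :=
    pairingMap_injective ρ σ hBinv hU'.1 hU hw hv hwv
  have hr1 : Module.finrank ℂ ↥U' ≤ Module.finrank ℂ ↥U := by
    have := LinearMap.finrank_le_finrank_of_injective hψ
    rwa [finrank_sdual] at this
  have hr2 : Module.finrank ℂ ↥U ≤ Module.finrank ℂ ↥U' := by
    have := LinearMap.finrank_le_finrank_of_injective hφ
    rwa [finrank_sdual] at this
  have hrank : Module.finrank ℂ ↥U' = Module.finrank ℂ (↥U →ₛₗ[σ] ℂ) := by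
    rw [finrank_sdual]; exact le_antisymm hr1 hr2
  refine ⟨LinearMap.linearEquivOfInjective _ hψ hrank, fun h x hx hx' u hu hu' => ?_⟩
  rw [LinearMap.linearEquivOfInjective_apply, LinearMap.linearEquivOfInjective_apply]
  show B u (ρ h x) = B (ρ h⁻¹ u) x
  exact pairing_shift ρ hBinv h u x

end Pairing


section Sup

variable [Group H] [AddCommGroup V] [Module ℂ V] (ρ : Representation ℂ H V)

lemma invt_sSup {s : Set (Submodule ℂ V)} (hs : ∀ U ∈ s, Invt ρ U) : Invt ρ (sSup s) := by
  intro h v hv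
  rw [sSup_eq_iSup'] at hv ⊢
  refine Submodule.iSup_induction' _ (motive := fun x _ => ρ h x ∈ ⨆ U : s, (U : Submodule ℂ V))
    ?_ ?_ ?_ hv
  · rintro ⟨U, hU⟩ x hx
    exact Submodule.mem_iSup_of_mem ⟨U, hU⟩ (hs U hU h x hx)
  · simp
  · intro x y _ _ hx hy
    rw [map_add]; exact add_mem hx hy

lemma exists_irredSub_le [FiniteDimensional ℂ V] :
    ∀ (U : Submodule ℂ V), Invt ρ U → U ≠ ⊥ → ∃ W ≤ U, IrredSub ρ W := by
  suffices Key : ∀ (n : ℕ) (U : Submodule ℂ V), Module.finrank ℂ U ≤ n → Invt ρ U → U ≠ ⊥ →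
      ∃ W ≤ U, IrredSub ρ W by
    exact fun U => Key (Module.finrank ℂ U) U le_rfl
  intro n
  induction n with
  | zero =>
    intro U hle hInvt hne
    exact absurd (Submodule.finrank_eq_zero.mp (Nat.le_zero.mp hle)) hne
  | succ n ih =>
    intro U hle hInvt hne
    by_cases hirr : ∀ U' ≤ U, Invt ρ U' → U' = ⊥ ∨ U' = U
    · exact ⟨U, le_rfl, hInvt, hne, hirr⟩
    · push_neg at hirr
      obtain ⟨U', hU'le, hU'invt, hU'1, hU'2⟩ := hirr
      have hlt : U' < U := lt_of_le_of_ne hU'le hU'2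
      have hfr : Module.finrank ℂ U' < Module.finrank ℂ U :=
        Submodule.finrank_lt_finrank_of_lt hlt
      obtain ⟨W, hWle, hW⟩ := ih U' (by omega) hU'invt hU'1
      exact ⟨W, hWle.trans hU'le, hW⟩

lemma sSup_irredSub_eq_top [FiniteDimensional ℂ V] (hss : Semisimple ρ) :
    sSup {U | IrredSub ρ U} = ⊤ := by
  set M := sSup {U | IrredSub ρ U} with hM
  have hMinvt : Invt ρ M := invt_sSup ρ fun U hU => hU.1
  obtain ⟨M', hM'invt, hcompl⟩ := hss M hMinvt
  rcases eq_or_ne M' ⊥ with hbot | hne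
  · rw [hbot] at hcompl
    have := hcompl.sup_eq_top
    rwa [sup_bot_eq] at this
  · obtain ⟨W, hWle, hW⟩ := exists_irredSub_le ρ M' hM'invt hne
    have h1 : W ≤ M := le_sSup hW
    have h2 : W = ⊥ := by
      rw [← le_bot_iff, ← hcompl.inf_eq_bot]
      exact le_inf h1 hWle
    exact absurd h2 hW.2.1

/-- The bi-isotypical class of `W`. -/
def clSet (σ : ℂ →+* ℂ) (W : Submodule ℂ V) : Set (Submodule ℂ V) :=
  {U | IrredSub ρ U ∧ (RepIso ρ U W ∨ RepDualIso σ ρ U W)}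

lemma self_mem_clSet (σ : ℂ →+* ℂ) {W : Submodule ℂ V} (hW : IrredSub ρ W) :
    W ∈ clSet ρ σ W :=
  ⟨hW, Or.inl (repIso_refl ρ W)⟩

variable [FiniteDimensional ℂ V] {σ : ℂ →+* ℂ}

lemma biRel_symm (hσσ : ∀ a, σ (σ a) = a) {X Y : Submodule ℂ V}
    (hX : Invt ρ X) (hY : Invt ρ Y)
    (h : RepIso ρ X Y ∨ RepDualIso σ ρ X Y) :
    RepIso ρ Y X ∨ RepDualIso σ ρ Y X := by
  rcases h with h | h
  · exact Or.inl (repIso_symm ρ hX h)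
  · exact Or.inr (repDualIso_symm ρ σ hσσ hX hY h)

lemma biRel_trans (hσσ : ∀ a, σ (σ a) = a) {X Y Z : Submodule ℂ V}
    (hX : Invt ρ X) (hY : Invt ρ Y) (hZ : Invt ρ Z)
    (h1 : RepIso ρ X Y ∨ RepDualIso σ ρ X Y)
    (h2 : RepIso ρ Y Z ∨ RepDualIso σ ρ Y Z) :
    RepIso ρ X Z ∨ RepDualIso σ ρ X Z := by
  rcases h1 with h1 | h1 <;> rcases h2 with h2 | h2
  · exact Or.inl (repIso_trans ρ hY h1 h2)
  · exact Or.inr (repIso_trans_dual ρ σ hY h1 h2)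
  · exact Or.inr (repDualIso_comp_iso ρ σ hY h1 (repIso_symm ρ hY h2))
  · exact Or.inl (repIso_of_dualIso_dualIso ρ σ hY hZ h1 (repDualIso_symm ρ σ hσσ hY hZ h2))

lemma clSet_eq_of_biRel (hσσ : ∀ a, σ (σ a) = a) {W1 W2 : Submodule ℂ V}
    (hW1 : IrredSub ρ W1) (hW2 : IrredSub ρ W2)
    (h : RepIso ρ W1 W2 ∨ RepDualIso σ ρ W1 W2) :
    clSet ρ σ W1 = clSet ρ σ W2 := by
  ext X
  simp only [clSet, Set.mem_setOf_eq]
  constructor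
  · rintro ⟨hX, hrel⟩
    exact ⟨hX, biRel_trans ρ hσσ hX.1 hW1.1 hW2.1 hrel h⟩
  · rintro ⟨hX, hrel⟩
    exact ⟨hX, biRel_trans ρ hσσ hX.1 hW2.1 hW1.1 hrel
      (biRel_symm ρ hσσ hW1.1 hW2.1 h)⟩

end Sup

/-- A nondegenerate `(ι,ε)`-symmetric `H`-module `(V,B)` is the direct sum
of its distinct bi-isotypical components `I_{π,π^{ι,*}}`; these are pairwise `B`-orthogonal
and the restriction of `B` to each of them is nondegenerate. -/
theorem stmt_4 [Group H] [AddCommGroup V] [Module ℂ V] [FiniteDimensional ℂ V]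
    (σ : ℂ →+* ℂ) (hσ : σ = RingHom.id ℂ ∨ σ = starRingEnd ℂ)
    (ε : ℂ) (hε : ε = 1 ∨ ε = -1)
    (ρ : Representation ℂ H V) (hss : Semisimple ρ)
    (B : V → V → ℂ)
    (hB1 : ∀ v v' w, B (v + v') w = B v w + B v' w)
    (hB2 : ∀ v w w', B v (w + w') = B v w + B v w')
    (hB3 : ∀ (a : ℂ) (v w : V), B (a • v) w = σ a * B v w)
    (hB4 : ∀ (a : ℂ) (v w : V), B v (a • w) = a * B v w)
    (hBinv : ∀ (h : H) (v w : V), B (ρ h v) (ρ h w) = B v w)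
    (hBsym : ∀ v w, B w v = ε * σ (B v w))
    (hBnd : ∀ v, (∀ w, B v w = 0) → v = 0) :
    -- the set of bi-isotypical components of V
    let S : Set (Submodule ℂ V) :=
      {C | ∃ W : Submodule ℂ V, IrredSub ρ W ∧
        C = sSup {U | IrredSub ρ U ∧ (RepIso ρ U W ∨ RepDualIso σ ρ U W)}}
    -- V is the direct sum of its distinct bi-isotypical components
    DirectSum.IsInternal (fun C : S => (C : Submodule ℂ V)) ∧
    -- distinct components are pairwise orthogonal
    (∀ C ∈ S, ∀ D ∈ S, C ≠ D → ∀ v ∈ C, ∀ w ∈ D, B v w = 0) ∧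
    -- the restriction of B to each component is nondegenerate
    (∀ C ∈ S, ∀ v ∈ C, (∀ w ∈ C, B v w = 0) → v = 0) := by
  intro S
  have hσσ : ∀ a, σ (σ a) = a := by
    rcases hσ with rfl | rfl
    · intro a; rfl
    · intro a; exact Complex.conj_conj a
  have hε0 : ε ≠ 0 := by rcases hε with rfl | rfl <;> norm_num
  have hB0r : ∀ v, B v 0 = 0 := fun v => by simpa using hB4 0 v 0
  have hB0l : ∀ w, B 0 w = 0 := fun w => by simpa using hB3 0 0 w
  have hSmem : ∀ C, C ∈ S ↔ ∃ W, IrredSub ρ W ∧ C = sSup (clSet ρ σ W) := fun C => Iff.rfl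
  have key : ∀ W1 W2 : Submodule ℂ V, IrredSub ρ W1 → IrredSub ρ W2 →
      sSup (clSet ρ σ W1) ≠ sSup (clSet ρ σ W2) →
      ∀ U1 ∈ clSet ρ σ W1, ∀ U2 ∈ clSet ρ σ W2, ∀ v ∈ U1, ∀ w ∈ U2, B v w = 0 := by
    intro W1 W2 hW1 hW2 hne U1 hU1 U2 hU2 v hv w hw
    by_contra hvw
    have hσB : σ (B v w) ≠ 0 := fun h0 => hvw (σ.injective (by rw [h0, map_zero]))
    have hwv : B w v ≠ 0 := by rw [hBsym]; exact mul_ne_zero hε0 hσB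
    have irr1 : IrredSub ρ U1 := hU1.1
    have irr2 : IrredSub ρ U2 := hU2.1
    have hdual : RepDualIso σ ρ U2 U1 :=
      repDualIso_of_pairing ρ σ hB1 hB2 hB3 hB4 hBinv irr1 irr2 hv hw hvw hwv
    have rel1 : RepIso ρ U1 W1 ∨ RepDualIso σ ρ U1 W1 := hU1.2
    have rel2 : RepIso ρ U2 W2 ∨ RepDualIso σ ρ U2 W2 := hU2.2
    have rel21 : RepIso ρ U2 U1 ∨ RepDualIso σ ρ U2 U1 := Or.inr hdual
    have relW : RepIso ρ W1 W2 ∨ RepDualIso σ ρ W1 W2 :=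
      biRel_trans ρ hσσ hW1.1 irr1.1 hW2.1
        (biRel_symm ρ hσσ irr1.1 hW1.1 rel1)
        (biRel_trans ρ hσσ irr1.1 irr2.1 hW2.1
          (biRel_symm ρ hσσ irr2.1 irr1.1 rel21) rel2)
    exact hne (by rw [clSet_eq_of_biRel ρ hσσ hW1 hW2 relW])
  have horth : ∀ W1 W2 : Submodule ℂ V, IrredSub ρ W1 → IrredSub ρ W2 →
      sSup (clSet ρ σ W1) ≠ sSup (clSet ρ σ W2) →
      ∀ v ∈ sSup (clSet ρ σ W1), ∀ w ∈ sSup (clSet ρ σ W2), B v w = 0 := by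
    intro W1 W2 hW1 hW2 hne v hv
    rw [sSup_eq_iSup'] at hv
    refine Submodule.iSup_induction' _
      (motive := fun v _ => ∀ w ∈ sSup (clSet ρ σ W2), B v w = 0) ?_ ?_ ?_ hv
    · rintro ⟨U1, hU1⟩ x hx w hw
      rw [sSup_eq_iSup'] at hw
      refine Submodule.iSup_induction' _ (motive := fun w _ => B x w = 0) ?_ (hB0r x) ?_ hw
      · rintro ⟨U2, hU2⟩ y hy
        exact key W1 W2 hW1 hW2 hne U1 hU1 U2 hU2 x hx y hy
      · intro y z _ _ hy hz
        rw [hB2, hy, hz, add_zero]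
    · intro w _; exact hB0l w
    · intro x y _ _ hx hy w hw
      rw [hB1, hx w hw, hy w hw, add_zero]
  have htop : sSup {U | IrredSub ρ U} = ⊤ := sSup_irredSub_eq_top ρ hss
  have hdecomp : ∀ (v : V) (P : V → Prop), P 0 → (∀ x y, P x → P y → P (x + y)) →
      (∀ U, IrredSub ρ U → ∀ x ∈ U, P x) → P v := by
    intro v P h0 hadd hpiece
    have hv : v ∈ sSup {U | IrredSub ρ U} := htop ▸ Submodule.mem_top
    rw [sSup_eq_iSup'] at hv
    refine Submodule.iSup_induction' _ (motive := fun x _ => P x) ?_ h0 (fun x y _ _ => hadd x y) hv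
    rintro ⟨U, hU⟩ x hx
    exact hpiece U hU x hx
  refine ⟨?_, ?_, ?_⟩
  · rw [DirectSum.isInternal_submodule_iff_iSupIndep_and_iSup_eq_top]
    constructor
    · rw [iSupIndep_def]
      intro i
      rw [Submodule.disjoint_def]
      intro v hvC hvRest
      obtain ⟨Wi, hWi, hWieq0⟩ := i.2
      have hWieq : (↑i : Submodule ℂ V) = sSup (clSet ρ σ Wi) := hWieq0
      apply hBnd
      intro w
      refine hdecomp w (fun w => B v w = 0) (hB0r v)
        (fun x y hx hy => by
          have hx' : B v x = 0 := hx
          have hy' : B v y = 0 := hy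
          show B v (x + y) = 0
          rw [hB2, hx', hy', add_zero]) ?_
      intro U hU x hx
      have hxU : x ∈ sSup (clSet ρ σ U) := le_sSup (self_mem_clSet ρ σ hU) hx
      rcases eq_or_ne (sSup (clSet ρ σ U)) ↑i with heq | hne2
      · have hxWi : x ∈ sSup (clSet ρ σ Wi) := by rw [← hWieq, ← heq]; exact hxU
        refine Submodule.iSup_induction' _ (motive := fun y _ => B y x = 0) ?_ (hB0l x) ?_ hvRest
        · rintro j y hy
          by_cases hji : j = i
          · rw [hji, iSup_neg (fun hh => hh rfl), Submodule.mem_bot] at hy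
            rw [hy]; exact hB0l x
          · rw [iSup_pos hji] at hy
            obtain ⟨Wj, hWj, hWjeq0⟩ := j.2
            have hWjeq : (↑j : Submodule ℂ V) = sSup (clSet ρ σ Wj) := hWjeq0
            have hyWj : y ∈ sSup (clSet ρ σ Wj) := by rw [← hWjeq]; exact hy
            have hne3 : sSup (clSet ρ σ Wj) ≠ sSup (clSet ρ σ Wi) := by
              rw [← hWjeq, ← hWieq]
              exact fun hh => hji (Subtype.ext hh)
            exact horth Wj Wi hWj hWi hne3 y hyWj x hxWi
        · intro y z _ _ hy hz
          rw [hB1, hy, hz, add_zero]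
      · have hvWi : v ∈ sSup (clSet ρ σ Wi) := by rw [← hWieq]; exact hvC
        have hne3 : sSup (clSet ρ σ Wi) ≠ sSup (clSet ρ σ U) := by
          rw [← hWieq]; exact fun hh => hne2 hh.symm
        exact horth Wi U hWi hU hne3 v hvWi x hxU
    · rw [eq_top_iff, ← htop]
      apply sSup_le
      intro U hU
      have h1 : U ≤ sSup (clSet ρ σ U) := le_sSup (self_mem_clSet ρ σ hU)
      have h2 : sSup (clSet ρ σ U) ≤ ⨆ C : S, (C : Submodule ℂ V) :=
        le_iSup (fun C : S => (C : Submodule ℂ V)) ⟨sSup (clSet ρ σ U), ⟨U, hU, rfl⟩⟩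
      exact h1.trans h2
  · intro C hC D hD hCD v hvC w hwD
    obtain ⟨W1, hW1, rfl⟩ := (hSmem C).mp hC
    obtain ⟨W2, hW2, rfl⟩ := (hSmem D).mp hD
    exact horth W1 W2 hW1 hW2 hCD v hvC w hwD
  · intro C hC v hvC hv0
    obtain ⟨W, hW, rfl⟩ := (hSmem C).mp hC
    apply hBnd
    intro w
    refine hdecomp w (fun w => B v w = 0) (hB0r v)
      (fun x y hx hy => by
        have hx' : B v x = 0 := hx
        have hy' : B v y = 0 := hy
        show B v (x + y) = 0
        rw [hB2, hx', hy', add_zero]) ?_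
    intro U hU x hx
    have hxU : x ∈ sSup (clSet ρ σ U) := le_sSup (self_mem_clSet ρ σ hU) hx
    rcases eq_or_ne (sSup (clSet ρ σ U)) (sSup (clSet ρ σ W)) with heq | hne2
    · exact hv0 x (by rw [← heq]; exact hxU)
    · exact horth W U hW hU (Ne.symm hne2) v hvC x hxU
end

section
/- Let ε ∈ {1,−1}. Let V be an isotypical H-module of type π (every irreducible invariant subspace of V is isomorphic to a fixed irreducible H-module π), equipped with an H-invariant nondegenerate ε-symmetric complex-bilinear form B (symmetric if ε = 1, skew-symmetric if ε = −1). Suppose π admits a nonzero H-invariant (−ε)-symmetric bilinear form (π is (−ε)-orthogonal). Then there is an H-invariant subspace Z ⊆ V with V = Z ⊕ Z' for some invariant Z', such that (V,B) is H-equivariantly isometric to Z × Z* equipped with the tautological ε-symmetric bilinear form (v,v*)·(w,w*) = ε⟨v*,w⟩ + ⟨w*,v⟩; in particular Z is B-isotropic and dim V = 2 dim Z. -/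
variable {H V P : Type*}

/-- The invariant subspace `U ⊆ V` is isomorphic, as an `H`-module, to the external
`H`-module `P`. -/
def RepIsoExt [Group H] [AddCommGroup V] [Module ℂ V] [AddCommGroup P] [Module ℂ P]
    (ρ : Representation ℂ H V) (ρP : Representation ℂ H P) (U : Submodule ℂ V) : Prop :=
  ∃ e : U ≃ₗ[ℂ] P, ∀ (h : H) (v : V) (hv : v ∈ U) (hv' : ρ h v ∈ U),
    e ⟨ρ h v, hv'⟩ = ρP h (e ⟨v, hv⟩)

open Module LinearMap

set_option linter.unusedSectionVars false
set_option maxHeartbeats 1000000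

section Helpers

lemma rep_apply_inv_apply [Group H] [AddCommGroup V] [Module ℂ V]
    (ρ : Representation ℂ H V) (h : H) (v : V) :
    ρ h (ρ h⁻¹ v) = v := by
  have : ρ h * ρ h⁻¹ = 1 := by rw [← map_mul, mul_inv_cancel, map_one]
  calc ρ h (ρ h⁻¹ v) = (ρ h * ρ h⁻¹) v := rfl
  _ = v := by rw [this]; rfl

lemma invt_sup [Group H] [AddCommGroup V] [Module ℂ V] {ρ : Representation ℂ H V}
    {A B : Submodule ℂ V} (hA : Invt ρ A) (hB : Invt ρ B) : Invt ρ (A ⊔ B) := by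
  intro h v hv
  obtain ⟨a, ha, b, hb, rfl⟩ := Submodule.mem_sup.mp hv
  rw [map_add]
  exact Submodule.add_mem_sup (hA h a ha) (hB h b hb)

lemma invt_inf [Group H] [AddCommGroup V] [Module ℂ V] {ρ : Representation ℂ H V}
    {A B : Submodule ℂ V} (hA : Invt ρ A) (hB : Invt ρ B) : Invt ρ (A ⊓ B) :=
  fun h v hv => ⟨hA h v hv.1, hB h v hv.2⟩

lemma invt_bot [Group H] [AddCommGroup V] [Module ℂ V] (ρ : Representation ℂ H V) :
    Invt ρ ⊥ := by
  intro h v hv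
  rw [Submodule.mem_bot] at hv ⊢
  rw [hv, map_zero]

lemma exists_irred [Group H] [AddCommGroup V] [Module ℂ V] [FiniteDimensional ℂ V]
    (ρ : Representation ℂ H V) :
    ∀ (n : ℕ) (W : Submodule ℂ V), finrank ℂ W = n → Invt ρ W → W ≠ ⊥ →
    ∃ U, U ≤ W ∧ IrredSub ρ U := by
  intro n
  induction n using Nat.strong_induction_on with
  | _ n IH =>
    intro W hn hW h0
    by_cases hirr : ∀ U' ≤ W, Invt ρ U' → U' = ⊥ ∨ U' = W
    · exact ⟨W, le_rfl, hW, h0, hirr⟩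
    · push_neg at hirr
      obtain ⟨U', hle, hinvt, hne1, hne2⟩ := hirr
      have hlt : U' < W := lt_of_le_of_ne hle hne2
      have hr : finrank ℂ U' < n := hn ▸ Submodule.finrank_lt_finrank_of_lt hlt
      obtain ⟨U, hUle, hU⟩ := IH _ hr U' rfl hinvt hne1
      exact ⟨U, hUle.trans hle, hU⟩

lemma irred_isotropic [Group H] [AddCommGroup V] [Module ℂ V] [FiniteDimensional ℂ V]
    [AddCommGroup P] [Module ℂ P] [FiniteDimensional ℂ P]
    (ε : ℂ) (hε : ε = 1 ∨ ε = -1)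
    (ρ : Representation ℂ H V) (ρP : Representation ℂ H P)
    (hPirr : ∀ U : Submodule ℂ P, (∀ (h : H) (v : P), v ∈ U → ρP h v ∈ U) →
      U = ⊥ ∨ U = ⊤)
    (b : P →ₗ[ℂ] P →ₗ[ℂ] ℂ)
    (hbinv : ∀ (h : H) (v w : P), b (ρP h v) (ρP h w) = b v w)
    (hbsym : ∀ v w, b w v = -ε * b v w)
    (hbne : ∃ v w, b v w ≠ 0)
    (B : V →ₗ[ℂ] V →ₗ[ℂ] ℂ)
    (hBinv : ∀ (h : H) (v w : V), B (ρ h v) (ρ h w) = B v w)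
    (hBsym : ∀ v w, B w v = ε * B v w)
    (U : Submodule ℂ V) (hU : IrredSub ρ U) (hiso : RepIsoExt ρ ρP U) :
    ∀ v ∈ U, ∀ w ∈ U, B v w = 0 := by
  have hεne : ε ≠ 0 := by rcases hε with h | h <;> rw [h] <;> norm_num
  obtain ⟨v0, w0, hb0⟩ := hbne
  have : Nontrivial P := by
    refine ⟨v0, 0, fun h => hb0 ?_⟩
    rw [h, map_zero]; rfl
  have hbmove : ∀ (h : H) (v w : P), b (ρP h v) w = b v (ρP h⁻¹ w) := by
    intro h v w
    conv_lhs => rw [← rep_apply_inv_apply ρP h w]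
    exact hbinv h v (ρP h⁻¹ w)
  have hbinj : Function.Injective b := by
    rw [← LinearMap.ker_eq_bot]
    have hki : ∀ (h : H) (v : P), v ∈ LinearMap.ker b → ρP h v ∈ LinearMap.ker b := by
      intro h v hv
      rw [LinearMap.mem_ker] at hv ⊢
      ext w
      rw [LinearMap.zero_apply, hbmove, hv]; rfl
    rcases hPirr (LinearMap.ker b) hki with h | h
    · exact h
    · exfalso
      apply hb0
      have : v0 ∈ LinearMap.ker b := h ▸ Submodule.mem_top
      rw [LinearMap.mem_ker] at this
      rw [this]; rfl
  have hbsurj : Function.Surjective b :=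
    (LinearMap.injective_iff_surjective_of_finrank_eq_finrank
      (Subspace.dual_finrank_eq).symm).mp hbinj
  obtain ⟨e, he⟩ := hiso
  set c : P →ₗ[ℂ] V := U.subtype ∘ₗ (e.symm : P →ₗ[ℂ] U) with hc
  have hcmem : ∀ p, c p ∈ U := fun p => (e.symm p).2
  have hce : ∀ (h : H) (p : P), c (ρP h p) = ρ h (c p) := by
    intro h p
    have hmem : (e.symm p : V) ∈ U := (e.symm p).2
    have hmem2 : ρ h ((e.symm p : V)) ∈ U := hU.1 h _ hmem
    have h1 := he h (e.symm p) hmem hmem2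
    have h2 : (⟨(e.symm p : V), hmem⟩ : U) = e.symm p := rfl
    rw [h2, e.apply_symm_apply] at h1
    have h3 : e.symm (ρP h p) = ⟨ρ h ((e.symm p : V)), hmem2⟩ := by
      rw [← h1, e.symm_apply_apply]
    show (U.subtype (e.symm (ρP h p)) : V) = _
    rw [h3]; rfl
  set b' : P →ₗ[ℂ] P →ₗ[ℂ] ℂ := B.compl₁₂ c c with hb'
  have hb'app : ∀ p q, b' p q = B (c p) (c q) := fun p q => rfl
  have hb'inv : ∀ (h : H) (p q : P), b' (ρP h p) (ρP h q) = b' p q := by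
    intro h p q
    rw [hb'app, hb'app, hce, hce, hBinv]
  have hb'move : ∀ (h : H) (p q : P), b' (ρP h p) q = b' p (ρP h⁻¹ q) := by
    intro h p q
    conv_lhs => rw [← rep_apply_inv_apply ρP h q]
    exact hb'inv h p (ρP h⁻¹ q)
  have hT : ∀ p : P, ∃ q : P, b q = b' p := fun p => hbsurj (b' p)
  choose T hTspec using hT
  have hTlin : ∀ (a : ℂ) (p q : P), T (a • p + q) = a • T p + T q := by
    intro a p q
    apply hbinj
    rw [hTspec, map_add, map_smul, map_add, map_smul, hTspec, hTspec]
  set Tl : P →ₗ[ℂ] P :=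
    { toFun := T
      map_add' := by
        intro p q
        have := hTlin 1 p q
        simpa using this
      map_smul' := by
        intro a p
        have := hTlin a p 0
        have hT0 : T 0 = 0 := by
          apply hbinj
          rw [hTspec, map_zero, map_zero]
        simpa [hT0] using this } with hTl
  have hTcomm : ∀ (h : H) (p : P), Tl (ρP h p) = ρP h (Tl p) := by
    intro h p
    apply hbinj
    show b (T (ρP h p)) = b (ρP h (T p))
    ext q
    rw [hTspec, hb'move, ← hTspec, ← hbmove]
  obtain ⟨μ, hμ⟩ := Module.End.exists_eigenvalue (Tl : Module.End ℂ P)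
  have hker : Module.End.eigenspace (Tl : Module.End ℂ P) μ = ⊤ := by
    have hki : ∀ (h : H) (v : P), v ∈ Module.End.eigenspace (Tl : Module.End ℂ P) μ →
        ρP h v ∈ Module.End.eigenspace (Tl : Module.End ℂ P) μ := by
      intro h v hv
      rw [Module.End.mem_eigenspace_iff] at hv ⊢
      show Tl (ρP h v) = _
      rw [hTcomm, hv, map_smul]
    rcases hPirr _ hki with h | h
    · exact absurd h hμ
    · exact h
  have hTall : ∀ p, Tl p = μ • p := by
    intro p
    have : p ∈ Module.End.eigenspace (Tl : Module.End ℂ P) μ := hker ▸ Submodule.mem_top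
    rwa [Module.End.mem_eigenspace_iff] at this
  have hb'b : ∀ p q, b' p q = μ * b p q := by
    intro p q
    have h1 : b (Tl p) = b' p := hTspec p
    rw [← h1]
    show b (Tl p) q = μ * b p q
    rw [hTall, map_smul]
    rfl
  have hb'zero : ∀ p q, b' p q = 0 := by
    intro p q
    have h1 : b' q p = ε * b' p q := by
      rw [hb'app, hb'app]
      exact hBsym (c p) (c q)
    have h2 : b' q p = -ε * b' p q := by
      rw [hb'b, hb'b, hbsym]
      ring
    have h3 : (2 * ε) * b' p q = 0 := by linear_combination h1.symm.trans h2
    rcases mul_eq_zero.mp h3 with h | h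
    · exact absurd h (mul_ne_zero two_ne_zero hεne)
    · exact h
  intro v hv w hw
  have hv' : c (e ⟨v, hv⟩) = v := by
    show (U.subtype (e.symm (e ⟨v, hv⟩)) : V) = v
    rw [e.symm_apply_apply]
    rfl
  have hw' : c (e ⟨w, hw⟩) = w := by
    show (U.subtype (e.symm (e ⟨w, hw⟩)) : V) = w
    rw [e.symm_apply_apply]
    rfl
  have := hb'zero (e ⟨v, hv⟩) (e ⟨w, hw⟩)
  rwa [hb'app, hv', hw'] at this

lemma ortho_exists [AddCommGroup V] [Module ℂ V] [FiniteDimensional ℂ V]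
    (B : V →ₗ[ℂ] V →ₗ[ℂ] ℂ) (A W : Submodule ℂ V) (hAW : A ≤ W)
    (hWnd : ∀ v ∈ W, (∀ w ∈ W, B v w = 0) → v = 0) :
    ∃ Ao : Submodule ℂ V, (∀ v, v ∈ Ao ↔ v ∈ W ∧ ∀ a ∈ A, B v a = 0) ∧
      finrank ℂ Ao + finrank ℂ A = finrank ℂ W := by
  set g : ↥W →ₗ[ℂ] Module.Dual ℂ ↥A := B.compl₁₂ W.subtype A.subtype with hg
  set m : ↥W →ₗ[ℂ] Module.Dual ℂ ↥W := B.compl₁₂ W.subtype W.subtype with hm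
  have hminj : Function.Injective m := by
    rw [← LinearMap.ker_eq_bot]
    rw [Submodule.eq_bot_iff]
    intro w hw
    rw [LinearMap.mem_ker] at hw
    have : (w : V) = 0 := by
      apply hWnd _ w.2
      intro x hx
      exact LinearMap.congr_fun hw ⟨x, hx⟩
    exact Subtype.ext this
  have hmsurj : Function.Surjective m :=
    (LinearMap.injective_iff_surjective_of_finrank_eq_finrank
      (Subspace.dual_finrank_eq).symm).mp hminj
  have hrsurj : Function.Surjective (Submodule.inclusion hAW).dualMap :=
    LinearMap.dualMap_surjective_of_injective (Submodule.inclusion_injective hAW)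
  have hcomp : ∀ w, g w = (Submodule.inclusion hAW).dualMap (m w) := by
    intro w; ext a; rfl
  have hgsurj : Function.Surjective g := by
    intro φ
    obtain ⟨ψ, hψ⟩ := hrsurj φ
    obtain ⟨w, hw⟩ := hmsurj ψ
    exact ⟨w, by rw [hcomp, hw, hψ]⟩
  refine ⟨(LinearMap.ker g).map W.subtype, ?_, ?_⟩
  · intro v
    constructor
    · rintro ⟨w, hw, rfl⟩
      refine ⟨w.2, fun a ha => ?_⟩
      have hw' : g w = 0 := hw
      exact LinearMap.congr_fun hw' ⟨a, ha⟩
    · rintro ⟨hvW, hperp⟩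
      refine ⟨⟨v, hvW⟩, ?_, rfl⟩
      show g ⟨v, hvW⟩ = 0
      ext a
      exact hperp a a.2
  · have h1 : finrank ℂ ((LinearMap.ker g).map W.subtype) = finrank ℂ (LinearMap.ker g) :=
      Submodule.finrank_map_subtype_eq W (LinearMap.ker g)
    have h2 := g.finrank_range_add_finrank_ker
    rw [LinearMap.range_eq_top.mpr hgsurj, finrank_top, Subspace.dual_finrank_eq] at h2
    omega

end Helpers

/-- Let `(V,B)` be an isotypical `H`-module of type `π` with an invariant
nondegenerate `ε`-symmetric bilinear form, where `π` is `(−ε)`-orthogonal. Then `V = Z ⊕ Z'`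
with `Z, Z'` invariant, and `(V,B)` is `H`-equivariantly isometric to `Z × Z*` with the
tautological `ε`-symmetric bilinear form; in particular `Z` is `B`-isotropic and
`dim V = 2 dim Z`. -/
theorem stmt_7 [Group H] [AddCommGroup V] [Module ℂ V] [FiniteDimensional ℂ V]
    [AddCommGroup P] [Module ℂ P] [FiniteDimensional ℂ P]
    (ε : ℂ) (hε : ε = 1 ∨ ε = -1)
    (ρ : Representation ℂ H V) (hss : Semisimple ρ)
    (ρP : Representation ℂ H P)
    (hPss : ∀ U : Submodule ℂ P, (∀ (h : H) (v : P), v ∈ U → ρP h v ∈ U) →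
      ∃ U', (∀ (h : H) (v : P), v ∈ U' → ρP h v ∈ U') ∧ IsCompl U U')
    (hPirr : ∀ U : Submodule ℂ P, (∀ (h : H) (v : P), v ∈ U → ρP h v ∈ U) →
      U = ⊥ ∨ U = ⊤)
    -- V is isotypical of type π
    (hisot : ∀ U : Submodule ℂ V, IrredSub ρ U → RepIsoExt ρ ρP U)
    -- π is (−ε)-orthogonal: it admits a nonzero invariant (−ε)-symmetric bilinear form
    (horth : ∃ b : P → P → ℂ,
      (∀ v v' w, b (v + v') w = b v w + b v' w) ∧
      (∀ v w w', b v (w + w') = b v w + b v w') ∧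
      (∀ (a : ℂ) (v w : P), b (a • v) w = a * b v w) ∧
      (∀ (a : ℂ) (v w : P), b v (a • w) = a * b v w) ∧
      (∀ (h : H) (v w : P), b (ρP h v) (ρP h w) = b v w) ∧
      (∀ v w, b w v = -ε * b v w) ∧ (∃ v w, b v w ≠ 0))
    -- B is an invariant nondegenerate ε-symmetric bilinear form on V
    (B : V → V → ℂ)
    (hB1 : ∀ v v' w, B (v + v') w = B v w + B v' w)
    (hB2 : ∀ v w w', B v (w + w') = B v w + B v w')
    (hB3 : ∀ (a : ℂ) (v w : V), B (a • v) w = a * B v w)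
    (hB4 : ∀ (a : ℂ) (v w : V), B v (a • w) = a * B v w)
    (hBinv : ∀ (h : H) (v w : V), B (ρ h v) (ρ h w) = B v w)
    (hBsym : ∀ v w, B w v = ε * B v w)
    (hBnd : ∀ v, (∀ w, B v w = 0) → v = 0) :
    ∃ Z Z' : Submodule ℂ V, Invt ρ Z ∧ Invt ρ Z' ∧ IsCompl Z Z' ∧
      -- Z is B-isotropic and dim V = 2 dim Z
      (∀ v ∈ Z, ∀ w ∈ Z, B v w = 0) ∧
      Module.finrank ℂ V = 2 * Module.finrank ℂ Z ∧
      -- (V,B) is H-equivariantly isometric to Z × Z* with the tautological form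
      ∃ Φ : V ≃ₗ[ℂ] Z × (Z →ₗ[ℂ] ℂ),
        (∀ (h : H) (v : V), ((Φ (ρ h v)).1 : V) = ρ h ((Φ v).1 : V)) ∧
        (∀ (h : H) (v : V) (w : V) (hw : w ∈ Z) (hw' : ρ h⁻¹ w ∈ Z),
          (Φ (ρ h v)).2 ⟨w, hw⟩ = (Φ v).2 ⟨ρ h⁻¹ w, hw'⟩) ∧
        (∀ v v' : V, ε * ((Φ v).2 (Φ v').1) + (Φ v').2 (Φ v).1 = B v v') := by
  classical
  have hεne : ε ≠ 0 := by rcases hε with h | h <;> rw [h] <;> norm_num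
  have hε2 : ε * ε = 1 := by rcases hε with h | h <;> rw [h] <;> norm_num
  set B' : V →ₗ[ℂ] V →ₗ[ℂ] ℂ := LinearMap.mk₂ ℂ B hB1 hB3 hB2 hB4 with hB'
  obtain ⟨b0, hb01, hb02, hb03, hb04, hb0inv, hb0sym, hb0ne⟩ := horth
  have hisotropic : ∀ U : Submodule ℂ V, IrredSub ρ U → ∀ v ∈ U, ∀ w ∈ U, B v w = 0 := by
    intro U hU
    exact irred_isotropic ε hε ρ ρP hPirr (LinearMap.mk₂ ℂ b0 hb01 hb03 hb02 hb04)
      hb0inv hb0sym hb0ne B' hBinv hBsym U hU (hisot U hU)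
  have hBmove : ∀ (h : H) (v w : V), B (ρ h v) w = B v (ρ h⁻¹ w) := by
    intro h v w
    conv_lhs => rw [← rep_apply_inv_apply ρ h w]
    exact hBinv h v (ρ h⁻¹ w)
  have hirrrank : ∀ U : Submodule ℂ V, IrredSub ρ U → finrank ℂ U = finrank ℂ P := by
    intro U hU
    obtain ⟨e, -⟩ := hisot U hU
    exact e.finrank_eq
  have hPrankpos : 0 < finrank ℂ P := by
    obtain ⟨v0, w0, hb0⟩ := hb0ne
    have : v0 ≠ 0 := by
      intro h
      apply hb0
      rw [h]
      have : b0 ((0:ℂ) • (0:P)) w0 = 0 * b0 0 w0 := hb03 0 0 w0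
      simpa using this
    exact finrank_pos_iff.mpr ⟨v0, 0, this⟩
  -- main decomposition by induction
  have decomp : ∀ (n : ℕ) (W : Submodule ℂ V), finrank ℂ W = n → Invt ρ W →
      (∀ v ∈ W, (∀ w ∈ W, B v w = 0) → v = 0) →
      ∃ Z Z' : Submodule ℂ V, Z ≤ W ∧ Z' ≤ W ∧ Invt ρ Z ∧ Invt ρ Z' ∧
        Z ⊓ Z' = ⊥ ∧ Z ⊔ Z' = W ∧
        (∀ v ∈ Z, ∀ w ∈ Z, B v w = 0) ∧ (∀ v ∈ Z', ∀ w ∈ Z', B v w = 0) := by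
    intro n
    induction n using Nat.strong_induction_on with
    | _ n IH =>
    intro W hn hWinvt hWnd
    rcases eq_or_ne W ⊥ with rfl | hW0
    · refine ⟨⊥, ⊥, le_rfl, le_rfl, invt_bot ρ, invt_bot ρ, inf_idem ⊥, sup_idem ⊥, ?_, ?_⟩ <;>
      · rintro v hv w hw
        rw [Submodule.mem_bot] at hv
        subst hv
        have : B ((0:ℂ) • (0:V)) w = 0 * B 0 w := hB3 0 0 w
        simpa using this
    · -- find an irreducible subspace
      obtain ⟨U, hUW, hUirr⟩ := exists_irred ρ (finrank ℂ W) W rfl hWinvt hW0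
      have hUinvt := hUirr.1
      have hU0 := hUirr.2.1
      have hUiso := hisotropic U hUirr
      have hUrank := hirrrank U hUirr
      obtain ⟨Wo, hWomem0, hWorank⟩ := ortho_exists B' U W hUW hWnd
      replace hWomem : ∀ v, v ∈ Wo ↔ v ∈ W ∧ ∀ a ∈ U, B v a = 0 := hWomem0
      have hWoW : Wo ≤ W := fun v hv => ((hWomem v).mp hv).1
      have hWoinvt : Invt ρ Wo := by
        intro h v hv
        rw [hWomem] at hv ⊢
        refine ⟨hWinvt h v hv.1, fun a ha => ?_⟩
        rw [hBmove]
        exact hv.2 _ (hUinvt h⁻¹ a ha)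
      have hUWo : U ≤ Wo := fun u hu => (hWomem u).mpr ⟨hUW hu, fun a ha => hUiso u hu a ha⟩
      obtain ⟨C0, hC0invt, hC0compl⟩ := hss Wo hWoinvt
      set C : Submodule ℂ V := C0 ⊓ W with hC
      have hCinvt : Invt ρ C := invt_inf hC0invt hWinvt
      have hCW : C ≤ W := inf_le_right
      have hWoC : Wo ⊓ C = ⊥ := by
        calc Wo ⊓ (C0 ⊓ W) = (Wo ⊓ C0) ⊓ W := by rw [inf_assoc]
        _ = ⊥ ⊓ W := by rw [disjoint_iff.mp hC0compl.disjoint]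
        _ = ⊥ := bot_inf_eq W
      have hWoCsup : Wo ⊔ C = W := by
        have h1 : (Wo ⊔ C0) ⊓ W = Wo ⊔ C0 ⊓ W := sup_inf_assoc_of_le C0 hWoW
        rw [codisjoint_iff.mp hC0compl.codisjoint, top_inf_eq] at h1
        exact h1.symm
      have hCrank : finrank ℂ C = finrank ℂ U := by
        have h1 := Submodule.finrank_sup_add_finrank_inf_eq Wo C
        rw [hWoCsup, hWoC, finrank_bot] at h1
        omega
      -- C is irreducible, hence isotropic
      have hC0' : C ≠ ⊥ := by
        intro h
        rw [h, finrank_bot] at hCrank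
        have : 0 < finrank ℂ U := hUrank ▸ hPrankpos
        omega
      have hCirr : IrredSub ρ C := by
        refine ⟨hCinvt, hC0', fun U' hU'le hU'invt => ?_⟩
        rcases eq_or_ne U' ⊥ with h | h
        · exact Or.inl h
        · right
          obtain ⟨U0, hU0le, hU0irr⟩ := exists_irred ρ (finrank ℂ U') U' rfl hU'invt h
          have h1 : finrank ℂ U0 = finrank ℂ P := hirrrank U0 hU0irr
          have h2 : U0 = C := by
            apply Submodule.eq_of_le_of_finrank_le (hU0le.trans hU'le)
            rw [h1, hCrank, hUrank]
          exact le_antisymm hU'le (h2 ▸ hU0le)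
      have hCiso := hisotropic C hCirr
      -- D = U ⊔ C is nondegenerate
      set D : Submodule ℂ V := U ⊔ C with hD
      have hDW : D ≤ W := sup_le hUW hCW
      have hDinvt : Invt ρ D := invt_sup hUinvt hCinvt
      have hUC : U ⊓ C = ⊥ := by
        rw [← le_bot_iff, ← hWoC]
        exact inf_le_inf_right C hUWo
      have hWoPerpU : ∀ w ∈ Wo, ∀ u ∈ U, B w u = 0 := fun w hw => ((hWomem w).mp hw).2
      have hDnd : ∀ v ∈ D, (∀ w ∈ D, B v w = 0) → v = 0 := by
        intro v hv hperp
        obtain ⟨u, hu, c, hc, rfl⟩ := Submodule.mem_sup.mp hv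
        have hcWo : c ∈ Wo := by
          rw [hWomem]
          refine ⟨hCW hc, fun a ha => ?_⟩
          have h1 : B (u + c) a = 0 := hperp a (Submodule.mem_sup_left ha)
          have h2 : B u a = 0 := hUiso u hu a ha
          rw [hB1] at h1
          rw [h2, zero_add] at h1
          exact h1
        have hc0 : c = 0 := by
          have : c ∈ Wo ⊓ C := ⟨hcWo, hc⟩
          rwa [hWoC, Submodule.mem_bot] at this
        subst hc0
        rw [add_zero] at hperp ⊢
        apply hWnd u (hUW hu)
        intro w hw
        rw [← hWoCsup] at hw
        obtain ⟨wo, hwo, c', hc', rfl⟩ := Submodule.mem_sup.mp hw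
        rw [hB2]
        have h1 : B u wo = 0 := by
          rw [hBsym wo u, hWoPerpU wo hwo u hu, mul_zero]
        have h2 : B u c' = 0 := hperp c' (Submodule.mem_sup_right hc')
        rw [h1, h2, add_zero]
      -- E = orthogonal of D in W
      obtain ⟨E, hEmem0, hErank⟩ := ortho_exists B' D W hDW hWnd
      replace hEmem : ∀ v, v ∈ E ↔ v ∈ W ∧ ∀ a ∈ D, B v a = 0 := hEmem0
      have hEW : E ≤ W := fun v hv => ((hEmem v).mp hv).1
      have hEinvt : Invt ρ E := by
        intro h v hv
        rw [hEmem] at hv ⊢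
        refine ⟨hWinvt h v hv.1, fun a ha => ?_⟩
        rw [hBmove]
        exact hv.2 _ (hDinvt h⁻¹ a ha)
      have hED : ∀ e ∈ E, ∀ d ∈ D, B e d = 0 := fun e he => ((hEmem e).mp he).2
      have hDE : ∀ d ∈ D, ∀ e ∈ E, B d e = 0 := by
        intro d hd e he
        rw [hBsym e d, hED e he d hd, mul_zero]
      have hDEinf : D ⊓ E = ⊥ := by
        rw [Submodule.eq_bot_iff]
        intro x ⟨hxD, hxE⟩
        exact hDnd x hxD (fun w hw => hED x hxE w hw)
      have hD0 : D ≠ ⊥ := by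
        intro h
        apply hU0
        rw [← le_bot_iff, ← h]
        exact le_sup_left
      have hDrankpos : 0 < finrank ℂ D := by
        rcases Nat.eq_zero_or_pos (finrank ℂ D) with h | h
        · exact absurd (Submodule.finrank_eq_zero.mp h) hD0
        · exact h
      have hDEsup : D ⊔ E = W := by
        apply Submodule.eq_of_le_of_finrank_le (sup_le hDW hEW)
        have h1 := Submodule.finrank_sup_add_finrank_inf_eq D E
        rw [hDEinf, finrank_bot] at h1
        omega
      have hEnd : ∀ v ∈ E, (∀ w ∈ E, B v w = 0) → v = 0 := by
        intro v hv hperp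
        apply hWnd v (hEW hv)
        intro w hw
        rw [← hDEsup] at hw
        obtain ⟨d, hd, e', he', rfl⟩ := Submodule.mem_sup.mp hw
        rw [hB2, hED v hv d hd, hperp e' he', add_zero]
      have hEranklt : finrank ℂ E < n := by
        rw [← hn]
        omega
      obtain ⟨Z1, Z1', hZ1E, hZ1'E, hZ1invt, hZ1'invt, hZ1inf, hZ1sup, hZ1iso, hZ1'iso⟩ :=
        IH _ hEranklt E rfl hEinvt hEnd
      refine ⟨U ⊔ Z1, C ⊔ Z1', sup_le hUW (hZ1E.trans hEW), sup_le hCW (hZ1'E.trans hEW),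
        invt_sup hUinvt hZ1invt, invt_sup hCinvt hZ1'invt, ?_, ?_, ?_, ?_⟩
      · -- intersection is ⊥
        rw [Submodule.eq_bot_iff]
        rintro x ⟨hx1, hx2⟩
        obtain ⟨u, hu, z1, hz1, hx1'⟩ := Submodule.mem_sup.mp hx1
        obtain ⟨c, hc, z1', hz1', hx2'⟩ := Submodule.mem_sup.mp hx2
        have hkey : u - c = z1' - z1 := by
          rw [sub_eq_sub_iff_add_eq_add]
          rw [hx1'.trans hx2'.symm]
          exact add_comm c z1'
        have hmem1 : u - c ∈ D := D.sub_mem (Submodule.mem_sup_left hu)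
          (Submodule.mem_sup_right hc)
        have hmem2 : u - c ∈ E := hkey ▸ E.sub_mem (hZ1'E hz1') (hZ1E hz1)
        have h1 : u - c = 0 := by
          have : u - c ∈ D ⊓ E := ⟨hmem1, hmem2⟩
          rwa [hDEinf, Submodule.mem_bot] at this
        have h2 : z1' - z1 = 0 := hkey ▸ h1
        have hu0 : u = 0 := by
          have huc : u = c := sub_eq_zero.mp h1
          have : u ∈ U ⊓ C := ⟨hu, huc ▸ hc⟩
          rwa [hUC, Submodule.mem_bot] at this
        have hz10 : z1 = 0 := by
          have hzz : z1 = z1' := (sub_eq_zero.mp h2).symm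
          have : z1 ∈ Z1 ⊓ Z1' := ⟨hz1, hzz ▸ hz1'⟩
          rwa [hZ1inf, Submodule.mem_bot] at this
        rw [← hx1', hu0, hz10, add_zero]
      · -- sup is W
        rw [sup_sup_sup_comm, hZ1sup]
        exact hDEsup
      · -- U ⊔ Z1 isotropic
        rintro v hv w hw
        obtain ⟨u, hu, z1, hz1, rfl⟩ := Submodule.mem_sup.mp hv
        obtain ⟨u', hu', z1', hz1', rfl⟩ := Submodule.mem_sup.mp hw
        rw [hB1, hB2, hB2]
        have h1 : B u u' = 0 := hUiso u hu u' hu'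
        have h2 : B u z1' = 0 := hDE u (Submodule.mem_sup_left hu) z1' (hZ1E hz1')
        have h3 : B z1 u' = 0 := hED z1 (hZ1E hz1) u' (Submodule.mem_sup_left hu')
        have h4 : B z1 z1' = 0 := hZ1iso z1 hz1 z1' hz1'
        rw [h1, h2, h3, h4]
        ring
      · -- C ⊔ Z1' isotropic
        rintro v hv w hw
        obtain ⟨c, hc, z1, hz1, rfl⟩ := Submodule.mem_sup.mp hv
        obtain ⟨c', hc', z1', hz1', rfl⟩ := Submodule.mem_sup.mp hw
        rw [hB1, hB2, hB2]
        have h1 : B c c' = 0 := hCiso c hc c' hc'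
        have h2 : B c z1' = 0 := hDE c (Submodule.mem_sup_right hc) z1' (hZ1'E hz1')
        have h3 : B z1 c' = 0 := hED z1 (hZ1'E hz1) c' (Submodule.mem_sup_right hc')
        have h4 : B z1 z1' = 0 := hZ1'iso z1 hz1 z1' hz1'
        rw [h1, h2, h3, h4]
        ring
  -- apply to W = ⊤
  have htopnd : ∀ v ∈ (⊤ : Submodule ℂ V), (∀ w ∈ (⊤ : Submodule ℂ V), B v w = 0) → v = 0 :=
    fun v _ hp => hBnd v (fun w => hp w trivial)
  obtain ⟨Z, Z', hZtop, hZ'top, hZinvt, hZ'invt, hZinf, hZsup, hZiso, hZ'iso⟩ :=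
    decomp (finrank ℂ (⊤ : Submodule ℂ V)) ⊤ rfl (fun _ _ _ => trivial) htopnd
  have hcompl : IsCompl Z Z' := ⟨disjoint_iff.mpr hZinf, codisjoint_iff.mpr hZsup⟩
  -- pairing nondegeneracy
  have hpair1 : ∀ z' ∈ Z', (∀ z ∈ Z, B z' z = 0) → z' = 0 := by
    intro z' hz' hp
    apply hBnd
    intro w
    have : w ∈ Z ⊔ Z' := hZsup ▸ Submodule.mem_top
    obtain ⟨z, hz, z2, hz2, rfl⟩ := Submodule.mem_sup.mp this
    rw [hB2, hp z hz, hZ'iso z' hz' z2 hz2, add_zero]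
  have hpair2 : ∀ z ∈ Z, (∀ z' ∈ Z', B z z' = 0) → z = 0 := by
    intro z hz hp
    apply hBnd
    intro w
    have : w ∈ Z ⊔ Z' := hZsup ▸ Submodule.mem_top
    obtain ⟨z1, hz1, z2, hz2, rfl⟩ := Submodule.mem_sup.mp this
    rw [hB2, hZiso z hz z1 hz1, hp z2 hz2, add_zero]
  -- the two injections
  set L : ↥Z' →ₗ[ℂ] (↥Z →ₗ[ℂ] ℂ) := ε • (B'.compl₁₂ Z'.subtype Z.subtype) with hL
  have hLapp : ∀ (z' : ↥Z') (z : ↥Z), L z' z = ε * B (z' : V) (z : V) := fun z' z => rfl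
  have hLinj : Function.Injective L := by
    rw [← LinearMap.ker_eq_bot, Submodule.eq_bot_iff]
    intro z' hz'
    rw [LinearMap.mem_ker] at hz'
    apply Subtype.ext
    show (z' : V) = 0
    apply hpair1 _ z'.2
    intro z hz
    have h1 : L z' ⟨z, hz⟩ = 0 := by rw [hz']; rfl
    rw [hLapp] at h1
    exact (mul_eq_zero.mp h1).resolve_left hεne
  set M : ↥Z →ₗ[ℂ] (↥Z' →ₗ[ℂ] ℂ) := B'.compl₁₂ Z.subtype Z'.subtype with hM
  have hMinj : Function.Injective M := by
    rw [← LinearMap.ker_eq_bot, Submodule.eq_bot_iff]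
    intro z hz
    rw [LinearMap.mem_ker] at hz
    apply Subtype.ext
    show (z : V) = 0
    apply hpair2 _ z.2
    intro z' hz'
    exact LinearMap.congr_fun hz ⟨z', hz'⟩
  have hdZ : finrank ℂ (↥Z →ₗ[ℂ] ℂ) = finrank ℂ Z := Subspace.dual_finrank_eq
  have hdZ' : finrank ℂ (↥Z' →ₗ[ℂ] ℂ) = finrank ℂ Z' := Subspace.dual_finrank_eq
  have hZZ' : finrank ℂ Z' = finrank ℂ Z := by
    have h1 := LinearMap.finrank_le_finrank_of_injective hLinj
    have h2 := LinearMap.finrank_le_finrank_of_injective hMinj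
    omega
  have hdimV : finrank ℂ V = 2 * finrank ℂ Z := by
    have := Submodule.finrank_add_eq_of_isCompl hcompl
    omega
  -- projections
  set p : V →ₗ[ℂ] ↥Z := Z.linearProjOfIsCompl Z' hcompl with hp
  set q : V →ₗ[ℂ] ↥Z' := Z'.linearProjOfIsCompl Z hcompl.symm with hq
  have hpq : ∀ v : V, ((p v : V) + (q v : V)) = v :=
    fun v => Submodule.projection_add_projection_eq_self hcompl v
  have hpmem : ∀ x : V, ∀ (hx : x ∈ Z), p x = ⟨x, hx⟩ := by
    intro x hx
    exact Submodule.linearProjOfIsCompl_apply_left hcompl ⟨x, hx⟩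
  have hpmem' : ∀ x : V, x ∈ Z' → p x = 0 := by
    intro x hx
    exact Submodule.projectionOnto_apply_of_mem_right hcompl hx
  have hqmem : ∀ x : V, ∀ (hx : x ∈ Z'), q x = ⟨x, hx⟩ := by
    intro x hx
    exact Submodule.linearProjOfIsCompl_apply_left hcompl.symm ⟨x, hx⟩
  have hqmem' : ∀ x : V, x ∈ Z → q x = 0 := by
    intro x hx
    exact Submodule.projectionOnto_apply_of_mem_right hcompl.symm hx
  have hpequiv : ∀ (h : H) (v : V), (p (ρ h v) : V) = ρ h (p v : V) := by
    intro h v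
    have hdec : ρ h v = ρ h ((p v : V)) + ρ h ((q v : V)) := by
      rw [← map_add, hpq]
    have hm1 : ρ h ((p v : V)) ∈ Z := hZinvt h _ (p v).2
    have hm2 : ρ h ((q v : V)) ∈ Z' := hZ'invt h _ (q v).2
    rw [hdec, map_add, hpmem _ hm1, hpmem' _ hm2, add_zero]
  have hqequiv : ∀ (h : H) (v : V), (q (ρ h v) : V) = ρ h (q v : V) := by
    intro h v
    have hdec : ρ h v = ρ h ((p v : V)) + ρ h ((q v : V)) := by
      rw [← map_add, hpq]
    have hm1 : ρ h ((p v : V)) ∈ Z := hZinvt h _ (p v).2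
    have hm2 : ρ h ((q v : V)) ∈ Z' := hZ'invt h _ (q v).2
    rw [hdec, map_add, hqmem' _ hm1, hqmem _ hm2, zero_add]
  -- the isometry
  set Φ0 : V →ₗ[ℂ] ↥Z × (↥Z →ₗ[ℂ] ℂ) := LinearMap.prod p (L ∘ₗ q) with hΦ0
  have hΦ0inj : Function.Injective Φ0 := by
    rw [← LinearMap.ker_eq_bot, Submodule.eq_bot_iff]
    intro v hv
    rw [LinearMap.mem_ker] at hv
    have h1 : p v = 0 := congrArg Prod.fst hv
    have h2 : L (q v) = 0 := congrArg Prod.snd hv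
    have h3 : q v = 0 := hLinj (by rw [h2, map_zero])
    rw [← hpq v, h1, h3]
    simp
  have hfr : finrank ℂ V = finrank ℂ (↥Z × (↥Z →ₗ[ℂ] ℂ)) := by
    rw [Module.finrank_prod, hdimV]
    omega
  have hΦ0surj : Function.Surjective Φ0 :=
    (LinearMap.injective_iff_surjective_of_finrank_eq_finrank hfr).mp hΦ0inj
  set Φ : V ≃ₗ[ℂ] ↥Z × (↥Z →ₗ[ℂ] ℂ) := LinearEquiv.ofBijective Φ0 ⟨hΦ0inj, hΦ0surj⟩ with hΦ
  have hΦapp : ∀ v, Φ v = (p v, L (q v)) := fun v => rfl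
  refine ⟨Z, Z', hZinvt, hZ'invt, hcompl, hZiso, hdimV, Φ, ?_, ?_, ?_⟩
  · intro h v
    rw [hΦapp, hΦapp]
    exact hpequiv h v
  · intro h v w hw hw'
    rw [hΦapp, hΦapp]
    show L (q (ρ h v)) ⟨w, hw⟩ = L (q v) ⟨ρ h⁻¹ w, hw'⟩
    rw [hLapp, hLapp, hqequiv, ← hBmove]
  · intro v v'
    rw [hΦapp, hΦapp]
    show ε * (L (q v) (p v')) + L (q v') (p v) = B v v'
    rw [hLapp, hLapp]
    have hexp : B v v' = B ((p v : V) + (q v : V)) ((p v' : V) + (q v' : V)) := by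
      rw [hpq, hpq]
    rw [hexp, hB1, hB2, hB2]
    have h1 : B (p v : V) (p v' : V) = 0 := hZiso _ (p v).2 _ (p v').2
    have h2 : B (q v : V) (q v' : V) = 0 := hZ'iso _ (q v).2 _ (q v').2
    have h3 : B (p v : V) (q v' : V) = ε * B (q v' : V) (p v : V) := hBsym _ _
    rw [h1, h2, h3]
    linear_combination (B (q v : V) (p v' : V)) * hε2
end

section
/- Fix ι ∈ {identity, complex conjugation} on ℂ and ε ∈ {1,−1}. Let V be an isotypical H-module of type π equipped with an H-invariant nondegenerate (ι,ε)-symmetric form B, and suppose π itself admits an H-invariant nondegenerate (ι,ε)-symmetric form b. Then, writing V ≅ π^{⊕r}, there exists an invertible real diagonal r×r matrix D = diag(d_1,…,d_r) such that (V,B) is H-equivariantly isometric to the B-orthogonal direct sum of the modules (π, d_i·b), i = 1,…,r; equivalently, (V,B) ≅ (π ⊗ ℂ^r, b ⊗ D). -/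
variable {H V P : Type*}

open Module

section Helpers

variable {H P : Type*} [Group H] [AddCommGroup P] [Module ℂ P]

lemma sigma_invol {σ : ℂ →+* ℂ} (hσ : σ = RingHom.id ℂ ∨ σ = starRingEnd ℂ) (z : ℂ) :
    σ (σ z) = z := by rcases hσ with h | h <;> simp [h]

lemma sigma_real {σ : ℂ →+* ℂ} (hσ : σ = RingHom.id ℂ ∨ σ = starRingEnd ℂ) (r : ℝ) :
    σ (r : ℂ) = (r : ℂ) := by rcases hσ with h | h <;> simp [h, Complex.conj_ofReal]

lemma sigma_eq_zero {σ : ℂ →+* ℂ} (hσ : σ = RingHom.id ℂ ∨ σ = starRingEnd ℂ) {z : ℂ} :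
    σ z = 0 ↔ z = 0 := by
  constructor
  · intro h
    have := congrArg σ h
    rwa [sigma_invol hσ, map_zero] at this
  · rintro rfl; exact map_zero σ

lemma rep_apply_inv (ρ : Representation ℂ H P) (h : H) (v : P) : ρ h (ρ h⁻¹ v) = v := by
  rw [← Module.End.mul_apply, ← map_mul, mul_inv_cancel, map_one, Module.End.one_apply]

lemma rep_inv_apply (ρ : Representation ℂ H P) (h : H) (v : P) : ρ h⁻¹ (ρ h v) = v := by
  rw [← Module.End.mul_apply, ← map_mul, inv_mul_cancel, map_one, Module.End.one_apply]

/-- Schur-type lemma: any invariant sesquilinear form on an irreducible module is a scalar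
multiple of a given nondegenerate one. -/
lemma schur_form [FiniteDimensional ℂ P]
    (σ : ℂ →+* ℂ) (hσ : σ = RingHom.id ℂ ∨ σ = starRingEnd ℂ)
    (ρP : Representation ℂ H P)
    (hPirr : ∀ U : Submodule ℂ P, (∀ (h : H) (v : P), v ∈ U → ρP h v ∈ U) → U = ⊥ ∨ U = ⊤)
    (b : P → P → ℂ)
    (hb1 : ∀ v v' w, b (v + v') w = b v w + b v' w)
    (hb2 : ∀ v w w', b v (w + w') = b v w + b v w')
    (hb3 : ∀ (a : ℂ) (v w : P), b (a • v) w = σ a * b v w)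
    (hb4 : ∀ (a : ℂ) (v w : P), b v (a • w) = a * b v w)
    (hbinv : ∀ (h : H) (v w : P), b (ρP h v) (ρP h w) = b v w)
    (hbnd : ∀ v, (∀ w, b v w = 0) → v = 0)
    (β : P → P → ℂ)
    (hβ1 : ∀ v v' w, β (v + v') w = β v w + β v' w)
    (hβ2 : ∀ v w w', β v (w + w') = β v w + β v w')
    (hβ3 : ∀ (a : ℂ) (v w : P), β (a • v) w = σ a * β v w)
    (hβ4 : ∀ (a : ℂ) (v w : P), β v (a • w) = a * β v w)
    (hβinv : ∀ (h : H) (v w : P), β (ρP h v) (ρP h w) = β v w) :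
    ∃ c : ℂ, ∀ v w, β v w = c * b v w := by
  rcases subsingleton_or_nontrivial P with hP | hP
  · refine ⟨0, fun v w => ?_⟩
    have hv : v = (0 : P) := Subsingleton.elim _ _
    have h0 : β ((0:ℂ) • (0:P)) w = σ 0 * β 0 w := hβ3 0 0 w
    rw [smul_zero, map_zero, zero_mul] at h0
    rw [hv, h0, zero_mul]
  · -- extensionality from nondegeneracy of b
    have bsub : ∀ (x y : P) (w : P), b (x - y) w = b x w - b y w := by
      intro x y w
      have : x - y = x + (-1 : ℂ) • y := by rw [neg_one_smul, sub_eq_add_neg]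
      rw [this, hb1, hb3, map_neg, map_one, neg_one_mul, ← sub_eq_add_neg]
    have bext : ∀ x y : P, (∀ w, b x w = b y w) → x = y := by
      intro x y hxy
      have : x - y = 0 := hbnd _ fun w => by rw [bsub, hxy, sub_self]
      exact sub_eq_zero.mp this
    haveI : FiniteDimensional ℝ P := Module.Finite.trans (R := ℝ) ℂ P
    -- the two semilinear "dual" maps, as real-linear maps into the complex dual
    set D := Module.Dual ℂ P with hD
    haveI : FiniteDimensional ℝ D := Module.Finite.trans (R := ℝ) ℂ D
    let mkd : ∀ (c : P → P → ℂ), (∀ v w w', c v (w + w') = c v w + c v w') →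
        (∀ (a : ℂ) (v w : P), c v (a • w) = a * c v w) → (∀ v v' w, c (v + v') w = c v w + c v' w) →
        (∀ (a : ℂ) (v w : P), c (a • v) w = σ a * c v w) → (P →ₗ[ℝ] D) :=
      fun c c2 c4 c1 c3 =>
      { toFun := fun v =>
          { toFun := fun w => c v w
            map_add' := c2 v
            map_smul' := fun a w => by simpa using c4 a v w }
        map_add' := fun v v' => LinearMap.ext fun w => c1 v v' w
        map_smul' := fun r v => LinearMap.ext fun w => by
          show c ((r : ℝ) • v) w = r • (c v w)
          rw [← Complex.coe_smul r v, c3, sigma_real hσ, Complex.real_smul] }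
    let Θb : P →ₗ[ℝ] D := mkd b hb2 hb4 hb1 hb3
    let Θβ : P →ₗ[ℝ] D := mkd β hβ2 hβ4 hβ1 hβ3
    have Θb_apply : ∀ v w, Θb v w = b v w := fun v w => rfl
    have Θβ_apply : ∀ v w, Θβ v w = β v w := fun v w => rfl
    have hinj : Function.Injective Θb := by
      intro x y hxy
      exact bext x y fun w => by rw [← Θb_apply, ← Θb_apply, hxy]
    have hdim : finrank ℝ (Module.Dual ℂ P) = finrank ℝ P := by
      have e1 : finrank ℝ ℂ * finrank ℂ P = finrank ℝ P := finrank_mul_finrank ℝ ℂ P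
      have e2 : finrank ℝ ℂ * finrank ℂ (Module.Dual ℂ P) = finrank ℝ (Module.Dual ℂ P) :=
        finrank_mul_finrank ℝ ℂ _
      rw [Subspace.dual_finrank_eq] at e2
      rw [← e1, ← e2]
    have hsurj : Function.Surjective Θb := by
      have hr : finrank ℝ (LinearMap.range Θb) = finrank ℝ D :=
        (LinearMap.finrank_range_of_inj hinj).trans hdim.symm
      have : LinearMap.range Θb = ⊤ := Submodule.eq_top_of_finrank_eq hr
      exact LinearMap.range_eq_top.mp this
    -- define T
    have Texists : ∀ v : P, ∃ t : P, ∀ w, b t w = β v w := by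
      intro v
      obtain ⟨t, ht⟩ := hsurj (Θβ v)
      exact ⟨t, fun w => by rw [← Θb_apply, ht, Θβ_apply]⟩
    choose T hT using Texists
    have Tadd : ∀ v v', T (v + v') = T v + T v' := by
      intro v v'
      refine bext _ _ fun w => ?_
      rw [hT, hβ1, hb1, hT, hT]
    have Tsmul : ∀ (a : ℂ) (v : P), T (a • v) = a • T v := by
      intro a v
      refine bext _ _ fun w => ?_
      rw [hT, hβ3, hb3, hT]
    have Tcomm : ∀ (h : H) (v : P), T (ρP h v) = ρP h (T v) := by
      intro h v
      refine bext _ _ fun w => ?_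
      have e1 : β (ρP h v) w = β v (ρP h⁻¹ w) := by
        conv_lhs => rw [← rep_apply_inv ρP h w, hβinv]
      have e2 : b (ρP h (T v)) w = b (T v) (ρP h⁻¹ w) := by
        conv_lhs => rw [← rep_apply_inv ρP h w, hbinv]
      rw [hT, e1, e2, hT]
    let Tl : Module.End ℂ P :=
      { toFun := T
        map_add' := Tadd
        map_smul' := fun a v => Tsmul a v }
    obtain ⟨c₀, hc₀⟩ := Module.End.exists_eigenvalue Tl
    obtain ⟨v₀, hv₀⟩ := hc₀.exists_hasEigenvector
    -- the eigenspace is invariant, hence everything is an eigenvector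
    have hE : ∀ v : P, Tl v = c₀ • v := by
      have hinvt : ∀ (h : H) (v : P), v ∈ Tl.eigenspace c₀ → ρP h v ∈ Tl.eigenspace c₀ := by
        intro h v hv
        rw [Module.End.mem_eigenspace_iff] at hv ⊢
        show T (ρP h v) = c₀ • ρP h v
        rw [Tcomm]
        show ρP h (Tl v) = _
        rw [hv, map_smul]
      rcases hPirr _ hinvt with hbot | htop
      · exact absurd (Module.End.hasEigenvalue_iff.mp hc₀) (not_not.mpr hbot)
      · intro v
        have : v ∈ Tl.eigenspace c₀ := htop ▸ Submodule.mem_top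
        exact Module.End.mem_eigenspace_iff.mp this
    refine ⟨σ c₀, fun v w => ?_⟩
    have : b (T v) w = β v w := hT v w
    have hTv : T v = c₀ • v := hE v
    rw [hTv, hb3] at this
    exact this.symm

end Helpers

section Part2

open Module

variable {H V : Type*} [Group H] [AddCommGroup V] [Module ℂ V]

lemma form_zero_left {B : V → V → ℂ} (hB1 : ∀ v v' w, B (v + v') w = B v w + B v' w)
    (w : V) : B 0 w = 0 := by
  have h := hB1 0 0 w
  rw [add_zero] at h
  exact (left_eq_add.mp h)

lemma form_zero_right {B : V → V → ℂ} (hB2 : ∀ v w w', B v (w + w') = B v w + B v w')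
    (v : V) : B v 0 = 0 := by
  have h := hB2 v 0 0
  rw [add_zero] at h
  exact (left_eq_add.mp h)

lemma form_sub_left {σ : ℂ →+* ℂ} {B : V → V → ℂ}
    (hB1 : ∀ v v' w, B (v + v') w = B v w + B v' w)
    (hB3 : ∀ (a : ℂ) (v w : V), B (a • v) w = σ a * B v w)
    (x y w : V) : B (x - y) w = B x w - B y w := by
  have : x - y = x + (-1 : ℂ) • y := by rw [neg_one_smul, sub_eq_add_neg]
  rw [this, hB1, hB3, map_neg, map_one, neg_one_mul, ← sub_eq_add_neg]

/-- Every nonzero invariant subspace contains an irreducible invariant subspace. -/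
lemma exists_irredSub [FiniteDimensional ℂ V] (ρ : Representation ℂ H V)
    (S : Submodule ℂ V) (hS : Invt ρ S) (hSne : S ≠ ⊥) :
    ∃ U, U ≤ S ∧ IrredSub ρ U := by
  classical
  have hex : ∃ m, ∃ U : Submodule ℂ V, U ≤ S ∧ Invt ρ U ∧ U ≠ ⊥ ∧ finrank ℂ U = m :=
    ⟨finrank ℂ S, S, le_refl S, hS, hSne, rfl⟩
  obtain ⟨U, hUS, hUinv, hUne, hUrank⟩ := Nat.find_spec hex
  refine ⟨U, hUS, hUinv, hUne, ?_⟩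
  intro U' hU'le hU'inv
  by_cases h0 : U' = ⊥
  · exact Or.inl h0
  · right
    have hmem : ∃ U₀ : Submodule ℂ V, U₀ ≤ S ∧ Invt ρ U₀ ∧ U₀ ≠ ⊥ ∧
        finrank ℂ U₀ = finrank ℂ U' := ⟨U', hU'le.trans hUS, hU'inv, h0, rfl⟩
    have h1 : Nat.find hex ≤ finrank ℂ U' := Nat.find_min' hex hmem
    have h2 : finrank ℂ U ≤ finrank ℂ U' := hUrank ▸ h1
    exact Submodule.eq_of_le_of_finrank_le hU'le h2

/-- If `B v w ≠ 0` for some `v w`, there are irreducible subspaces pairing nontrivially. -/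
lemma exists_irred_pair [FiniteDimensional ℂ V] (ρ : Representation ℂ H V)
    (hss : Semisimple ρ) (B : V → V → ℂ)
    (hB1 : ∀ v v' w, B (v + v') w = B v w + B v' w)
    (hB2 : ∀ v w w', B v (w + w') = B v w + B v w')
    (v w : V) (hvw : B v w ≠ 0) :
    ∃ U U' : Submodule ℂ V, IrredSub ρ U ∧ IrredSub ρ U' ∧
      ∃ u ∈ U, ∃ u' ∈ U', B u u' ≠ 0 := by
  set S : Submodule ℂ V := ⨆ i : {U : Submodule ℂ V // IrredSub ρ U}, (i : Submodule ℂ V)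
    with hSdef
  have hSinv : Invt ρ S := by
    intro h x hx
    refine Submodule.iSup_induction (motive := fun y => ρ h y ∈ S) _ hx ?_ ?_ ?_
    · intro i x hxi
      exact (le_iSup (fun i : {U : Submodule ℂ V // IrredSub ρ U} => (i : Submodule ℂ V)) i)
        (i.2.1 h x hxi)
    · show ρ h (0 : V) ∈ S
      rw [map_zero]; exact Submodule.zero_mem S
    · intro x y hx hy
      show ρ h (x + y) ∈ S
      rw [map_add]; exact Submodule.add_mem S hx hy
  have htop : S = ⊤ := by
    obtain ⟨S', hS'inv, hcompl⟩ := hss _ hSinv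
    by_cases hS' : S' = ⊥
    · rw [hS'] at hcompl
      exact codisjoint_bot.mp hcompl.codisjoint
    · obtain ⟨U, hUle, hUirr⟩ := exists_irredSub ρ S' hS'inv hS'
      have h1 : U ≤ S := le_iSup (fun i : {U : Submodule ℂ V // IrredSub ρ U} =>
        (i : Submodule ℂ V)) ⟨U, hUirr⟩
      have h2 : U ≤ S ⊓ S' := le_inf h1 hUle
      rw [hcompl.disjoint.eq_bot] at h2
      exact absurd (le_bot_iff.mp h2) hUirr.2.1
  have step1 : ∃ U' : Submodule ℂ V, IrredSub ρ U' ∧ ∃ u' ∈ U', B v u' ≠ 0 := by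
    by_contra hcon
    push_neg at hcon
    have hall : ∀ y ∈ S, B v y = 0 := by
      intro y hy
      refine Submodule.iSup_induction (motive := fun y => B v y = 0) _ hy ?_ ?_ ?_
      · intro i x hxi
        exact hcon i i.2 x hxi
      · show B v 0 = 0
        exact form_zero_right hB2 v
      · intro x y hx hy
        show B v (x + y) = 0
        rw [hB2, hx, hy, add_zero]
    exact hvw (hall w (htop ▸ Submodule.mem_top))
  obtain ⟨U', hU'irr, u', hu'U, hvu'⟩ := step1
  have step2 : ∃ U : Submodule ℂ V, IrredSub ρ U ∧ ∃ u ∈ U, B u u' ≠ 0 := by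
    by_contra hcon
    push_neg at hcon
    have hall : ∀ y ∈ S, B y u' = 0 := by
      intro y hy
      refine Submodule.iSup_induction (motive := fun y => B y u' = 0) _ hy ?_ ?_ ?_
      · intro i x hxi
        exact hcon i i.2 x hxi
      · show B 0 u' = 0
        exact form_zero_left hB1 u'
      · intro x y hx hy
        show B (x + y) u' = 0
        rw [hB1, hx, hy, add_zero]
    exact hvu' (hall v (htop ▸ Submodule.mem_top))
  obtain ⟨U, hUirr, u, huU, huu'⟩ := step2
  exact ⟨U, U', hUirr, hU'irr, u, huU, u', hu'U, huu'⟩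

/-- Radical dichotomy for an irreducible subspace. -/
lemma irred_rad {σ : ℂ →+* ℂ} (ρ : Representation ℂ H V) (B : V → V → ℂ)
    (hB1 : ∀ v v' w, B (v + v') w = B v w + B v' w)
    (hB3 : ∀ (a : ℂ) (v w : V), B (a • v) w = σ a * B v w)
    (hBinv : ∀ (h : H) (v w : V), B (ρ h v) (ρ h w) = B v w)
    (U : Submodule ℂ V) (hU : IrredSub ρ U) :
    (∀ u ∈ U, ∀ u' ∈ U, B u u' = 0) ∨ (∀ u ∈ U, u ≠ 0 → ∃ u' ∈ U, B u u' ≠ 0) := by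
  set R : Submodule ℂ V :=
    { carrier := {x | x ∈ U ∧ ∀ u' ∈ U, B x u' = 0}
      add_mem' := by
        rintro x y ⟨hxU, hx⟩ ⟨hyU, hy⟩
        exact ⟨U.add_mem hxU hyU, fun u' hu' => by rw [hB1, hx u' hu', hy u' hu', add_zero]⟩
      zero_mem' := ⟨U.zero_mem, fun u' _ => form_zero_left hB1 u'⟩
      smul_mem' := by
        rintro a x ⟨hxU, hx⟩
        exact ⟨U.smul_mem a hxU, fun u' hu' => by rw [hB3, hx u' hu', mul_zero]⟩ } with hR
  have hRle : R ≤ U := fun x hx => hx.1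
  have hRinv : Invt ρ R := by
    rintro h x ⟨hxU, hx⟩
    refine ⟨hU.1 h x hxU, fun u' hu' => ?_⟩
    have h1 : B (ρ h x) (ρ h (ρ h⁻¹ u')) = B x (ρ h⁻¹ u') := hBinv h x (ρ h⁻¹ u')
    rw [rep_apply_inv] at h1
    rw [h1]
    exact hx _ (hU.1 h⁻¹ u' hu')
  rcases hU.2.2 R hRle hRinv with hbot | heq
  · right
    intro u huU hune
    by_contra hcon
    push_neg at hcon
    have : u ∈ R := ⟨huU, hcon⟩
    rw [hbot] at this
    exact hune (Submodule.mem_bot ℂ |>.mp this)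
  · left
    intro u huU
    have : u ∈ R := heq ▸ huU
    exact this.2

end Part2

section Part3

open Module

variable {H V P : Type*} [Group H] [AddCommGroup V] [Module ℂ V]
  [AddCommGroup P] [Module ℂ P]

lemma eps_sq {ε : ℂ} (hε : ε = 1 ∨ ε = -1) : ε * ε = 1 := by
  rcases hε with h | h <;> rw [h] <;> norm_num

lemma sigma_eps {σ : ℂ →+* ℂ} {ε : ℂ} (hε : ε = 1 ∨ ε = -1) : σ ε = ε := by
  rcases hε with h | h <;> rw [h] <;> simp

/-- Coercion form of the equivariance of `e.symm`. -/
lemma symm_equivar (ρ : Representation ℂ H V) (ρP : Representation ℂ H P)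
    (U₀ : Submodule ℂ V) (hU₀ : Invt ρ U₀) (e : U₀ ≃ₗ[ℂ] P)
    (he : ∀ (h : H) (v : V) (hv : v ∈ U₀) (hv' : ρ h v ∈ U₀),
      e ⟨ρ h v, hv'⟩ = ρP h (e ⟨v, hv⟩))
    (h : H) (p : P) : ((e.symm (ρP h p) : U₀) : V) = ρ h ((e.symm p : U₀) : V) := by
  set v : V := ((e.symm p : U₀) : V) with hv_def
  have hv : v ∈ U₀ := (e.symm p).2
  have hv' : ρ h v ∈ U₀ := hU₀ h v hv
  have h1 : e ⟨ρ h v, hv'⟩ = ρP h (e ⟨v, hv⟩) := he h v hv hv'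
  have h2 : (⟨v, hv⟩ : U₀) = e.symm p := Subtype.ext rfl
  rw [h2, e.apply_symm_apply] at h1
  have h3 : (⟨ρ h v, hv'⟩ : U₀) = e.symm (ρP h p) := by
    rw [← h1, e.symm_apply_apply]
  exact (congrArg Subtype.val h3).symm

/-- There is an irreducible invariant subspace on which `B` is nondegenerate. -/
lemma exists_nondeg_irred [FiniteDimensional ℂ V] [FiniteDimensional ℂ P]
    (σ : ℂ →+* ℂ) (hσ : σ = RingHom.id ℂ ∨ σ = starRingEnd ℂ)
    (ε : ℂ) (hε : ε = 1 ∨ ε = -1)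
    (ρP : Representation ℂ H P)
    (hPirr : ∀ U : Submodule ℂ P, (∀ (h : H) (v : P), v ∈ U → ρP h v ∈ U) →
      U = ⊥ ∨ U = ⊤)
    (b : P → P → ℂ)
    (hb1 : ∀ v v' w, b (v + v') w = b v w + b v' w)
    (hb2 : ∀ v w w', b v (w + w') = b v w + b v w')
    (hb3 : ∀ (a : ℂ) (v w : P), b (a • v) w = σ a * b v w)
    (hb4 : ∀ (a : ℂ) (v w : P), b v (a • w) = a * b v w)
    (hbinv : ∀ (h : H) (v w : P), b (ρP h v) (ρP h w) = b v w)
    (hbsym : ∀ v w, b w v = ε * σ (b v w))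
    (hbnd : ∀ v, (∀ w, b v w = 0) → v = 0)
    (ρ : Representation ℂ H V) (hss : Semisimple ρ)
    (hisot : ∀ U : Submodule ℂ V, IrredSub ρ U → RepIsoExt ρ ρP U)
    (B : V → V → ℂ)
    (hB1 : ∀ v v' w, B (v + v') w = B v w + B v' w)
    (hB2 : ∀ v w w', B v (w + w') = B v w + B v w')
    (hB3 : ∀ (a : ℂ) (v w : V), B (a • v) w = σ a * B v w)
    (hB4 : ∀ (a : ℂ) (v w : V), B v (a • w) = a * B v w)
    (hBinv : ∀ (h : H) (v w : V), B (ρ h v) (ρ h w) = B v w)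
    (hBsym : ∀ v w, B w v = ε * σ (B v w))
    (hBnd : ∀ v, (∀ w, B v w = 0) → v = 0)
    (v₀ : V) (hv₀ : v₀ ≠ 0) :
    ∃ W : Submodule ℂ V, IrredSub ρ W ∧ (∀ w ∈ W, w ≠ 0 → ∃ w' ∈ W, B w w' ≠ 0) := by
  -- find a nontrivially-pairing pair of irreducibles
  have hw₀ : ∃ w₀, B v₀ w₀ ≠ 0 := by
    by_contra hcon
    push_neg at hcon
    exact hv₀ (hBnd v₀ hcon)
  obtain ⟨w₀, hvw₀⟩ := hw₀
  obtain ⟨U, U', hUirr, hU'irr, u₀, hu₀U, u₀', hu₀'U, hBu₀⟩ :=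
    exists_irred_pair ρ hss B hB1 hB2 v₀ w₀ hvw₀
  rcases irred_rad (σ := σ) ρ B hB1 hB3 hBinv U hUirr with hUiso | hUgood
  swap
  · exact ⟨U, hUirr, hUgood⟩
  rcases irred_rad (σ := σ) ρ B hB1 hB3 hBinv U' hU'irr with hU'iso | hU'good
  swap
  · exact ⟨U', hU'irr, hU'good⟩
  -- both U and U' are totally isotropic; build a "graph" subspace
  obtain ⟨eU, heU⟩ := hisot U hUirr
  obtain ⟨eU', heU'⟩ := hisot U' hU'irr
  have hdisj : U ⊓ U' = ⊥ := by
    have hinfinv : Invt ρ (U ⊓ U') := fun h x hx =>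
      ⟨hUirr.1 h x hx.1, hU'irr.1 h x hx.2⟩
    rcases hUirr.2.2 (U ⊓ U') inf_le_left hinfinv with h | h
    · exact h
    · have hle : U ≤ U' := by rw [← h]; exact inf_le_right
      exact absurd (hU'iso u₀ (hle hu₀U) u₀' hu₀'U) hBu₀
  -- the transported pairing
  set β : P → P → ℂ := fun p q => B ((eU.symm p : U) : V) ((eU'.symm q : U') : V) with hβdef
  have hβ1 : ∀ p p' q, β (p + p') q = β p q + β p' q := by
    intro p p' q
    show B ((eU.symm (p + p') : U) : V) _ = _
    rw [map_add, Submodule.coe_add, hB1]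
  have hβ2 : ∀ p q q', β p (q + q') = β p q + β p q' := by
    intro p q q'
    show B _ ((eU'.symm (q + q') : U') : V) = _
    rw [map_add, Submodule.coe_add, hB2]
  have hβ3 : ∀ (a : ℂ) (p q : P), β (a • p) q = σ a * β p q := by
    intro a p q
    show B ((eU.symm (a • p) : U) : V) _ = _
    rw [map_smul, Submodule.coe_smul, hB3]
  have hβ4 : ∀ (a : ℂ) (p q : P), β p (a • q) = a * β p q := by
    intro a p q
    show B _ ((eU'.symm (a • q) : U') : V) = _
    rw [map_smul, Submodule.coe_smul, hB4]
  have hβinv : ∀ (h : H) (p q : P), β (ρP h p) (ρP h q) = β p q := by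
    intro h p q
    show B ((eU.symm (ρP h p) : U) : V) ((eU'.symm (ρP h q) : U') : V) = _
    rw [symm_equivar ρ ρP U hUirr.1 eU heU, symm_equivar ρ ρP U' hU'irr.1 eU' heU', hBinv]
  obtain ⟨cβ, hcβ⟩ := schur_form σ hσ ρP hPirr b hb1 hb2 hb3 hb4 hbinv hbnd
    β hβ1 hβ2 hβ3 hβ4 hβinv
  -- cβ ≠ 0
  have hβu₀ : β (eU ⟨u₀, hu₀U⟩) (eU' ⟨u₀', hu₀'U⟩) = B u₀ u₀' := by
    show B ((eU.symm (eU ⟨u₀, hu₀U⟩) : U) : V) ((eU'.symm (eU' ⟨u₀', hu₀'U⟩) : U') : V) = _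
    rw [eU.symm_apply_apply, eU'.symm_apply_apply]
  have hcβ0 : cβ ≠ 0 := by
    intro h
    rw [← hβu₀, hcβ, h, zero_mul] at hBu₀
    exact hBu₀ rfl
  -- the mirrored pairing
  have hγ : ∀ p q : P, B ((eU'.symm p : U') : V) ((eU.symm q : U) : V) = σ cβ * b p q := by
    intro p q
    have h1 : B ((eU'.symm p : U') : V) ((eU.symm q : U) : V)
        = ε * σ (B ((eU.symm q : U) : V) ((eU'.symm p : U') : V)) := hBsym _ _
    have h2 : B ((eU.symm q : U) : V) ((eU'.symm p : U') : V) = cβ * b q p := hcβ q p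
    have h3 : σ (b q p) = ε * b p q := by
      rw [hbsym p q, map_mul, sigma_eps hε, sigma_invol hσ]
    have h5 := eps_sq hε
    rw [h1, h2, map_mul, h3]
    linear_combination σ cβ * b p q * h5
  -- the graph map
  set t : ℂ := σ cβ with ht_def
  have hσt : σ t = cβ := sigma_invol hσ cβ
  have ht0 : t ≠ 0 := fun h => hcβ0 (by rw [← sigma_invol hσ cβ, ← ht_def, h, map_zero])
  set L : U →ₗ[ℂ] V :=
    U.subtype + (t • (U'.subtype.comp ((eU'.symm.toLinearMap).comp (eU.toLinearMap))))
    with hLdef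
  have L_apply : ∀ u : U, L u = (u : V) + t • ((eU'.symm (eU u) : U') : V) := fun u => rfl
  -- the form on the graph
  have keyform : ∀ u u' : U,
      B (L u) (L u') = (2 * cβ * σ cβ) * b (eU u) (eU u') := by
    intro u u'
    rw [L_apply, L_apply, hB1, hB2, hB2]
    have e1 : B (u : V) (u' : V) = 0 := hUiso _ u.2 _ u'.2
    have e2 : B ((eU'.symm (eU u) : U') : V) ((eU'.symm (eU u') : U') : V) = 0 :=
      hU'iso _ (eU'.symm (eU u)).2 _ (eU'.symm (eU u')).2
    have e3 : B (u : V) (t • ((eU'.symm (eU u') : U') : V))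
        = t * (cβ * b (eU u) (eU u')) := by
      rw [hB4]
      have : B (u : V) ((eU'.symm (eU u') : U') : V) = cβ * b (eU u) (eU u') := by
        have h0 := hcβ (eU u) (eU u')
        rw [hβdef] at h0
        simpa [eU.symm_apply_apply] using h0
      rw [this]
    have e4 : B (t • ((eU'.symm (eU u) : U') : V)) (u' : V)
        = σ t * (σ cβ * b (eU u) (eU u')) := by
      rw [hB3]
      have h0 := hγ (eU u) (eU u')
      rw [eU.symm_apply_apply] at h0
      rw [h0]
    have e5 : B (t • ((eU'.symm (eU u) : U') : V)) (t • ((eU'.symm (eU u') : U') : V))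
        = 0 := by
      rw [hB3, hB4, e2, mul_zero, mul_zero]
    rw [e1, e3, e4, e5, hσt]
    ring
  have hLinj : Function.Injective L := by
    have h0 : ∀ u : U, L u = 0 → u = 0 := by
      intro u hu
      rw [L_apply] at hu
      have h1 : (u : V) = -(t • ((eU'.symm (eU u) : U') : V)) := by
        rw [eq_neg_iff_add_eq_zero]; exact hu
      have h2 : (u : V) ∈ U' := by
        rw [h1]
        exact U'.neg_mem (U'.smul_mem t (eU'.symm (eU u)).2)
      have h3 : (u : V) ∈ U ⊓ U' := ⟨u.2, h2⟩
      rw [hdisj] at h3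
      exact Subtype.ext (Submodule.mem_bot ℂ |>.mp h3)
    intro x y hxy
    have : L (x - y) = 0 := by rw [map_sub, hxy, sub_self]
    have := h0 _ this
    exact sub_eq_zero.mp this
  set W : Submodule ℂ V := LinearMap.range L with hWdef
  -- equivariance of L
  have hLequi : ∀ (h : H) (u : U),
      ρ h (L u) = L ⟨ρ h (u : V), hUirr.1 h _ u.2⟩ := by
    intro h u
    rw [L_apply, L_apply]
    rw [map_add, map_smul]
    congr 1
    congr 1
    have h1 : eU (⟨ρ h (u : V), hUirr.1 h _ u.2⟩ : U) = ρP h (eU u) := heU h (u : V) u.2 _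
    rw [h1]
    exact (symm_equivar ρ ρP U' hU'irr.1 eU' heU' h (eU u)).symm
  have hWinv : Invt ρ W := by
    rintro h v ⟨u, rfl⟩
    exact ⟨⟨ρ h (u : V), hUirr.1 h _ u.2⟩, (hLequi h u).symm⟩
  have hWne : W ≠ ⊥ := by
    obtain ⟨x, hxU, hx0⟩ := Submodule.ne_bot_iff U |>.mp hUirr.2.1
    rw [Submodule.ne_bot_iff]
    refine ⟨L ⟨x, hxU⟩, ⟨⟨x, hxU⟩, rfl⟩, ?_⟩
    intro h
    have : (⟨x, hxU⟩ : U) = 0 := hLinj (by rw [h, map_zero])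
    exact hx0 (by simpa using congrArg Subtype.val this)
  have hWirr : IrredSub ρ W := by
    refine ⟨hWinv, hWne, ?_⟩
    intro W' hW'le hW'inv
    by_cases hW'0 : W' = ⊥
    · exact Or.inl hW'0
    · right
      set preW : Submodule ℂ V := Submodule.map U.subtype (Submodule.comap L W')
        with hpreWdef
      have hpreWle : preW ≤ U := Submodule.map_subtype_le U _
      have hpreWinv : Invt ρ preW := by
        rintro h v hv
        rw [hpreWdef, Submodule.mem_map] at hv
        obtain ⟨u, hu, rfl⟩ := hv
        rw [Submodule.mem_comap] at hu
        rw [hpreWdef, Submodule.mem_map]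
        refine ⟨⟨ρ h (u : V), hUirr.1 h _ u.2⟩, ?_, rfl⟩
        rw [Submodule.mem_comap, ← hLequi h u]
        exact hW'inv h _ hu
      have hpreWne : preW ≠ ⊥ := by
        obtain ⟨w, hwW', hw0⟩ := Submodule.ne_bot_iff W' |>.mp hW'0
        obtain ⟨u, rfl⟩ := hW'le hwW'
        rw [Submodule.ne_bot_iff]
        refine ⟨(u : V), ?_, ?_⟩
        · exact ⟨u, Submodule.mem_comap.mpr hwW', rfl⟩
        · intro h
          exact hw0 (by rw [show u = 0 from Subtype.ext h, map_zero])
      rcases hUirr.2.2 preW hpreWle hpreWinv with h | h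
      · exact absurd h hpreWne
      · refine le_antisymm hW'le ?_
        rintro v ⟨u, rfl⟩
        have hmem : (u : V) ∈ preW := by rw [h]; exact u.2
        rw [hpreWdef, Submodule.mem_map] at hmem
        obtain ⟨u₂, hu₂, hcoe⟩ := hmem
        have he2 : u₂ = u := Subtype.ext hcoe
        exact he2 ▸ Submodule.mem_comap.mp hu₂
  refine ⟨W, hWirr, ?_⟩
  rintro w ⟨u, rfl⟩ hw0
  have hu0 : u ≠ 0 := fun h => hw0 (by rw [h, map_zero])
  have hp0 : eU u ≠ 0 := fun h => hu0 (by simpa using congrArg eU.symm h)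
  have hq : ∃ q, b (eU u) q ≠ 0 := by
    by_contra hcon
    push_neg at hcon
    exact hp0 (hbnd _ hcon)
  obtain ⟨q, hq⟩ := hq
  refine ⟨L (eU.symm q), ⟨eU.symm q, rfl⟩, ?_⟩
  rw [keyform, eU.apply_symm_apply]
  have hσcβ0 : σ cβ ≠ 0 := fun h => hcβ0 ((sigma_eq_zero hσ).mp h)
  exact mul_ne_zero (mul_ne_zero (mul_ne_zero two_ne_zero hcβ0) hσcβ0) hq

end Part3

section Part4

open Module

variable {V : Type*} [AddCommGroup V] [Module ℂ V]

lemma coe_real_smul (p : Submodule ℂ V) (r : ℝ) (y : p) :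
    ((r • y : p) : V) = r • (y : V) := by
  rw [← Complex.coe_smul r y, ← Complex.coe_smul r (y : V)]
  rfl

/-- The orthogonal complement of a subspace on which the form is nondegenerate is a
complement. -/
lemma ortho_isCompl [FiniteDimensional ℂ V]
    (σ : ℂ →+* ℂ) (hσ : σ = RingHom.id ℂ ∨ σ = starRingEnd ℂ)
    (B : V → V → ℂ)
    (hB1 : ∀ v v' w, B (v + v') w = B v w + B v' w)
    (hB2 : ∀ v w w', B v (w + w') = B v w + B v w')
    (hB3 : ∀ (a : ℂ) (v w : V), B (a • v) w = σ a * B v w)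
    (hB4 : ∀ (a : ℂ) (v w : V), B v (a • w) = a * B v w)
    (W Wp : Submodule ℂ V)
    (hWp : ∀ v : V, v ∈ Wp ↔ ∀ w ∈ W, B v w = 0)
    (hWnd : ∀ w ∈ W, w ≠ 0 → ∃ w' ∈ W, B w w' ≠ 0) :
    IsCompl W Wp ∧ finrank ℂ Wp = finrank ℂ V - finrank ℂ W := by
  haveI : FiniteDimensional ℝ V := Module.Finite.trans (R := ℝ) ℂ V
  haveI : FiniteDimensional ℝ ↥W := Module.Finite.trans (R := ℝ) ℂ ↥W
  haveI : FiniteDimensional ℝ ↥Wp := Module.Finite.trans (R := ℝ) ℂ ↥Wp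
  haveI : FiniteDimensional ℝ (Module.Dual ℂ ↥W) := Module.Finite.trans (R := ℝ) ℂ _
  -- the pairing map into the dual of W
  set Θ : V →ₗ[ℝ] Module.Dual ℂ ↥W :=
    { toFun := fun v =>
        { toFun := fun w => B v (w : V)
          map_add' := fun w w' => by
            show B v (((w + w' : ↥W)) : V) = B v (w : V) + B v (w' : V)
            rw [Submodule.coe_add, hB2]
          map_smul' := fun a w => by
            show B v (((a • w : ↥W)) : V) = a * B v (w : V)
            rw [Submodule.coe_smul, hB4] }
      map_add' := fun v v' => LinearMap.ext fun w => hB1 v v' (w : V)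
      map_smul' := fun r v => LinearMap.ext fun w => by
        show B ((r : ℝ) • v) (w : V) = r • (B v (w : V))
        rw [← Complex.coe_smul r v, hB3, sigma_real hσ, Complex.real_smul] } with hΘdef
  have Θ_apply : ∀ (v : V) (w : ↥W), Θ v w = B v (w : V) := fun v w => rfl
  have hker : ∀ v : V, Θ v = 0 ↔ v ∈ Wp := by
    intro v
    rw [hWp]
    constructor
    · intro h w hw
      have := LinearMap.congr_fun h ⟨w, hw⟩
      simpa [Θ_apply] using this
    · intro h
      refine LinearMap.ext fun w => ?_
      simpa [Θ_apply] using h (w : V) w.2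
  set ΘW : ↥W →ₗ[ℝ] Module.Dual ℂ ↥W :=
    { toFun := fun w => Θ (w : V)
      map_add' := fun w w' => by
        show Θ (((w + w' : ↥W)) : V) = Θ (w : V) + Θ (w' : V)
        rw [Submodule.coe_add, map_add]
      map_smul' := fun r w => by
        show Θ (((r • w : ↥W)) : V) = r • Θ (w : V)
        rw [coe_real_smul, map_smul] } with hΘWdef
  have hΘWinj : Function.Injective ΘW := by
    intro x y hxy
    have hsub : Θ ((x : V) - (y : V)) = 0 := by
      have hx : Θ (x : V) = Θ (y : V) := hxy
      rw [map_sub, hx, sub_self]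
    have hsub' : ((x : V) - (y : V)) ∈ Wp := (hker _).mp hsub
    rw [hWp] at hsub'
    have hmem : (x : V) - (y : V) ∈ W := W.sub_mem x.2 y.2
    by_contra hne
    have hne' : (x : V) - (y : V) ≠ 0 := by
      intro h
      exact hne (Subtype.ext (sub_eq_zero.mp h))
    obtain ⟨w', hw'W, hw'⟩ := hWnd _ hmem hne'
    exact hw' (hsub' w' hw'W)
  -- dimension bookkeeping
  have h2V : finrank ℝ V = 2 * finrank ℂ V := by
    rw [← finrank_mul_finrank ℝ ℂ V, Complex.finrank_real_complex]
  have h2W : finrank ℝ ↥W = 2 * finrank ℂ ↥W := by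
    rw [← finrank_mul_finrank ℝ ℂ ↥W, Complex.finrank_real_complex]
  have h2Wp : finrank ℝ ↥Wp = 2 * finrank ℂ ↥Wp := by
    rw [← finrank_mul_finrank ℝ ℂ ↥Wp, Complex.finrank_real_complex]
  have h2D : finrank ℝ (Module.Dual ℂ ↥W) = 2 * finrank ℂ ↥W := by
    rw [← finrank_mul_finrank ℝ ℂ (Module.Dual ℂ ↥W), Complex.finrank_real_complex,
      Subspace.dual_finrank_eq]
  -- the kernel of Θ is Wp
  have hkerWp : finrank ℝ ↥(LinearMap.ker Θ) = finrank ℝ ↥Wp := by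
    have e : ↥(LinearMap.ker Θ) ≃ₗ[ℝ] ↥Wp :=
      { toFun := fun x => ⟨(x : V), (hker _).mp (LinearMap.mem_ker.mp x.2)⟩
        invFun := fun y => ⟨(y : V), LinearMap.mem_ker.mpr ((hker _).mpr y.2)⟩
        left_inv := fun x => Subtype.ext rfl
        right_inv := fun y => Subtype.ext rfl
        map_add' := fun x y => Subtype.ext rfl
        map_smul' := fun r x => Subtype.ext (by
          show ((r • x : LinearMap.ker Θ) : V) = ((r • (⟨(x : V), _⟩ : ↥Wp) : ↥Wp) : V)
          rw [coe_real_smul]; rfl) }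
    exact e.finrank_eq
  have hrange : finrank ℝ ↥(LinearMap.range Θ) = 2 * finrank ℂ ↥W := by
    refine le_antisymm ?_ ?_
    · have := Submodule.finrank_le (LinearMap.range Θ)
      rwa [h2D] at this
    · have hle : LinearMap.range ΘW ≤ LinearMap.range Θ := by
        rintro x ⟨w, rfl⟩
        exact ⟨(w : V), rfl⟩
      have h1 : finrank ℝ ↥(LinearMap.range ΘW) = finrank ℝ ↥W :=
        LinearMap.finrank_range_of_inj hΘWinj
      have h2 := Submodule.finrank_mono hle
      rw [h1, h2W] at h2
      exact h2
  have hrn := LinearMap.finrank_range_add_finrank_ker Θ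
  rw [hrange, hkerWp, h2Wp, h2V] at hrn
  have hWleV : finrank ℂ ↥W ≤ finrank ℂ V := Submodule.finrank_le W
  have hdimWp : finrank ℂ ↥Wp = finrank ℂ V - finrank ℂ ↥W := by omega
  -- disjointness
  have hdisj : W ⊓ Wp = ⊥ := by
    rw [Submodule.eq_bot_iff]
    intro x hx
    obtain ⟨hxW, hxWp⟩ := Submodule.mem_inf.mp hx
    rw [hWp] at hxWp
    by_contra hx0
    obtain ⟨w', hw'W, hw'⟩ := hWnd x hxW hx0
    exact hw' (hxWp w' hw'W)
  have hsup : W ⊔ Wp = ⊤ := by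
    have h1 := Submodule.finrank_sup_add_finrank_inf_eq W Wp
    rw [hdisj, finrank_bot, add_zero, hdimWp] at h1
    refine Submodule.eq_top_of_finrank_eq ?_
    rw [h1]; omega
  exact ⟨⟨disjoint_iff.mpr hdisj, codisjoint_iff.mpr hsup⟩, hdimWp⟩

end Part4

section Part5

variable {P : Type*} [AddCommGroup P] [Module ℂ P]

/-- `Fin.cons` as a linear equivalence. -/
def consLEquiv (r : ℕ) : (P × (Fin r → P)) ≃ₗ[ℂ] (Fin (r + 1) → P) :=
  { toFun := fun x => Fin.cons x.1 x.2
    invFun := fun f => (f 0, fun i => f i.succ)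
    left_inv := fun x => by
      refine Prod.ext ?_ ?_
      · simp
      · funext i; simp
    right_inv := fun f => by
      funext i
      refine Fin.cases ?_ ?_ i <;> simp
    map_add' := fun x y => by
      funext i
      refine Fin.cases ?_ ?_ i <;> simp
    map_smul' := fun a x => by
      funext i
      refine Fin.cases ?_ ?_ i <;> simp }

@[simp] lemma consLEquiv_apply_zero (r : ℕ) (x : P × (Fin r → P)) :
    consLEquiv r x 0 = x.1 := by simp [consLEquiv]

@[simp] lemma consLEquiv_apply_succ (r : ℕ) (x : P × (Fin r → P)) (i : Fin r) :
    consLEquiv r x i.succ = x.2 i := by simp [consLEquiv]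

end Part5

section Main

open Module

variable {H : Type*} [Group H]

/-- The trivial case of the main theorem. -/
lemma triv_case {V P : Type*} [AddCommGroup V] [Module ℂ V] [AddCommGroup P] [Module ℂ P]
    (ρ : Representation ℂ H V) (ρP : Representation ℂ H P)
    (b : P → P → ℂ) (B : V → V → ℂ)
    (hB1 : ∀ v v' w, B (v + v') w = B v w + B v' w)
    (hsub : Subsingleton V) :
    ∃ (r : ℕ) (d : Fin r → ℝ), (∀ i, d i ≠ 0) ∧
      ∃ Φ : V ≃ₗ[ℂ] (Fin r → P),
        (∀ (h : H) (v : V) (i : Fin r), Φ (ρ h v) i = ρP h (Φ v i)) ∧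
        (∀ v w : V, B v w = ∑ i, (d i : ℂ) * b (Φ v i) (Φ w i)) := by
  haveI := hsub
  haveI : Subsingleton (Fin 0 → P) := ⟨fun a b => funext fun i => i.elim0⟩
  refine ⟨0, fun i => i.elim0, fun i => i.elim0, LinearEquiv.ofSubsingleton V (Fin 0 → P),
    fun h v i => i.elim0, fun v w => ?_⟩
  have hv : v = 0 := Subsingleton.elim v 0
  rw [hv, form_zero_left hB1]
  simp

theorem aux {P : Type*} [AddCommGroup P] [Module ℂ P] [FiniteDimensional ℂ P]
    (σ : ℂ →+* ℂ) (hσ : σ = RingHom.id ℂ ∨ σ = starRingEnd ℂ)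
    (ε : ℂ) (hε : ε = 1 ∨ ε = -1)
    (ρP : Representation ℂ H P)
    (hPirr : ∀ U : Submodule ℂ P, (∀ (h : H) (v : P), v ∈ U → ρP h v ∈ U) →
      U = ⊥ ∨ U = ⊤)
    (b : P → P → ℂ)
    (hb1 : ∀ v v' w, b (v + v') w = b v w + b v' w)
    (hb2 : ∀ v w w', b v (w + w') = b v w + b v w')
    (hb3 : ∀ (a : ℂ) (v w : P), b (a • v) w = σ a * b v w)
    (hb4 : ∀ (a : ℂ) (v w : P), b v (a • w) = a * b v w)
    (hbinv : ∀ (h : H) (v w : P), b (ρP h v) (ρP h w) = b v w)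
    (hbsym : ∀ v w, b w v = ε * σ (b v w))
    (hbnd : ∀ v, (∀ w, b v w = 0) → v = 0) :
    ∀ (n : ℕ) (V : Type u) [AddCommGroup V] [Module ℂ V] [FiniteDimensional ℂ V],
      finrank ℂ V ≤ n →
      ∀ (ρ : Representation ℂ H V), Semisimple ρ →
      (∀ U : Submodule ℂ V, IrredSub ρ U → RepIsoExt ρ ρP U) →
      ∀ B : V → V → ℂ,
      (∀ v v' w, B (v + v') w = B v w + B v' w) →
      (∀ v w w', B v (w + w') = B v w + B v w') →
      (∀ (a : ℂ) (v w : V), B (a • v) w = σ a * B v w) →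
      (∀ (a : ℂ) (v w : V), B v (a • w) = a * B v w) →
      (∀ (h : H) (v w : V), B (ρ h v) (ρ h w) = B v w) →
      (∀ v w, B w v = ε * σ (B v w)) →
      (∀ v, (∀ w, B v w = 0) → v = 0) →
      ∃ (r : ℕ) (d : Fin r → ℝ), (∀ i, d i ≠ 0) ∧
        ∃ Φ : V ≃ₗ[ℂ] (Fin r → P),
          (∀ (h : H) (v : V) (i : Fin r), Φ (ρ h v) i = ρP h (Φ v i)) ∧
          (∀ v w : V, B v w = ∑ i, (d i : ℂ) * b (Φ v i) (Φ w i)) := by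
  intro n
  induction n with
  | zero =>
    intro V _ _ _ hrank ρ hss hisot B hB1 hB2 hB3 hB4 hBinv hBsym hBnd
    have h0 : finrank ℂ V = 0 := Nat.le_zero.mp hrank
    exact triv_case ρ ρP b B hB1 (Module.finrank_zero_iff.mp h0)
  | succ n ih =>
    intro V _ _ _ hrank ρ hss hisot B hB1 hB2 hB3 hB4 hBinv hBsym hBnd
    by_cases h0 : finrank ℂ V = 0
    · exact triv_case ρ ρP b B hB1 (Module.finrank_zero_iff.mp h0)
    haveI : Nontrivial V := Module.finrank_pos_iff.mp (Nat.pos_of_ne_zero h0)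
    obtain ⟨v₀, hv₀⟩ := exists_ne (0 : V)
    obtain ⟨W, hWirr, hWnd⟩ := exists_nondeg_irred σ hσ ε hε ρP hPirr b hb1 hb2 hb3 hb4
      hbinv hbsym hbnd ρ hss hisot B hB1 hB2 hB3 hB4 hBinv hBsym hBnd v₀ hv₀
    obtain ⟨eW, heW⟩ := hisot W hWirr
    -- the transported form on P and its Schur scalar
    set βW : P → P → ℂ := fun p q => B ((eW.symm p : W) : V) ((eW.symm q : W) : V) with hβWdef
    have hβ1 : ∀ p p' q, βW (p + p') q = βW p q + βW p' q := by
      intro p p' q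
      show B ((eW.symm (p + p') : W) : V) _ = _
      rw [map_add, Submodule.coe_add, hB1]
    have hβ2 : ∀ p q q', βW p (q + q') = βW p q + βW p q' := by
      intro p q q'
      show B _ ((eW.symm (q + q') : W) : V) = _
      rw [map_add, Submodule.coe_add, hB2]
    have hβ3 : ∀ (a : ℂ) (p q : P), βW (a • p) q = σ a * βW p q := by
      intro a p q
      show B ((eW.symm (a • p) : W) : V) _ = _
      rw [map_smul, Submodule.coe_smul, hB3]
    have hβ4 : ∀ (a : ℂ) (p q : P), βW p (a • q) = a * βW p q := by
      intro a p q
      show B _ ((eW.symm (a • q) : W) : V) = _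
      rw [map_smul, Submodule.coe_smul, hB4]
    have hβinv : ∀ (h : H) (p q : P), βW (ρP h p) (ρP h q) = βW p q := by
      intro h p q
      show B ((eW.symm (ρP h p) : W) : V) ((eW.symm (ρP h q) : W) : V) = _
      rw [symm_equivar ρ ρP W hWirr.1 eW heW, symm_equivar ρ ρP W hWirr.1 eW heW, hBinv]
    obtain ⟨cW, hcW⟩ := schur_form σ hσ ρP hPirr b hb1 hb2 hb3 hb4 hbinv hbnd
      βW hβ1 hβ2 hβ3 hβ4 hβinv
    have hBWcoe : ∀ w w' : W, B (w : V) (w' : V) = cW * b (eW w) (eW w') := by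
      intro w w'
      have h0 := hcW (eW w) (eW w')
      rw [hβWdef] at h0
      simpa [eW.symm_apply_apply] using h0
    -- cW is a nonzero "real" scalar
    obtain ⟨x, hxW, hx0⟩ := (Submodule.ne_bot_iff W).mp hWirr.2.1
    obtain ⟨w', hw'W, hBx⟩ := hWnd x hxW hx0
    set w₁ : W := ⟨x, hxW⟩
    set w₂ : W := ⟨w', hw'W⟩
    have hBx' : B (w₁ : V) (w₂ : V) ≠ 0 := hBx
    have hcW0 : cW ≠ 0 := by
      intro h
      rw [hBWcoe, h, zero_mul] at hBx'
      exact hBx' rfl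
    have hbpq : b (eW w₁) (eW w₂) ≠ 0 := by
      intro h
      rw [hBWcoe, h, mul_zero] at hBx'
      exact hBx' rfl
    have hsymcW : σ cW = cW := by
      have e1 : cW * (ε * σ (b (eW w₁) (eW w₂))) = ε * (σ cW * σ (b (eW w₁) (eW w₂))) := by
        calc cW * (ε * σ (b (eW w₁) (eW w₂))) = cW * b (eW w₂) (eW w₁) := by
              rw [hbsym (eW w₁) (eW w₂)]
          _ = B (w₂ : V) (w₁ : V) := (hBWcoe w₂ w₁).symm
          _ = ε * σ (B (w₁ : V) (w₂ : V)) := hBsym _ _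
          _ = ε * σ (cW * b (eW w₁) (eW w₂)) := by rw [hBWcoe w₁ w₂]
          _ = ε * (σ cW * σ (b (eW w₁) (eW w₂))) := by rw [map_mul]
      have hεne : ε ≠ 0 := by rcases hε with h | h <;> rw [h] <;> norm_num
      have hσb : σ (b (eW w₁) (eW w₂)) ≠ 0 := fun h => hbpq ((sigma_eq_zero hσ).mp h)
      have e2 : (σ cW - cW) * (ε * σ (b (eW w₁) (eW w₂))) = 0 := by linear_combination -e1
      rcases mul_eq_zero.mp e2 with h | h
      · exact sub_eq_zero.mp h
      · exact absurd h (mul_ne_zero hεne hσb)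
    -- rescale
    obtain ⟨lam, dW, hlam0, hdW0, hfac⟩ :
        ∃ (lam : ℂ) (dW : ℝ), lam ≠ 0 ∧ dW ≠ 0 ∧ σ lam * lam * (dW : ℂ) = cW := by
      rcases hσ with hid | hconj
      · have hll : cW ^ ((1:ℂ)/2) * cW ^ ((1:ℂ)/2) = cW := by
          rw [← Complex.cpow_add _ _ hcW0]
          norm_num
        refine ⟨cW ^ ((1:ℂ)/2), 1, ?_, one_ne_zero, ?_⟩
        · intro h
          rw [h, zero_mul] at hll
          exact hcW0 hll.symm
        · rw [hid]
          simpa using hll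
      · have hre : ((cW.re : ℝ) : ℂ) = cW := Complex.conj_eq_iff_re.mp (by rw [← hconj]; exact hsymcW)
        refine ⟨1, cW.re, one_ne_zero, ?_, ?_⟩
        · intro h
          apply hcW0
          rw [← hre, h, Complex.ofReal_zero]
        · rw [map_one, one_mul, one_mul, hre]
    set eW2 : ↥W ≃ₗ[ℂ] P := eW.trans (LinearEquiv.smulOfNeZero ℂ P lam hlam0)
      with heW2def
    have heW2apply : ∀ w : W, eW2 w = lam • eW w := fun w => rfl
    have heW2 : ∀ (h : H) (v : V) (hv : v ∈ W) (hv' : ρ h v ∈ W),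
        eW2 ⟨ρ h v, hv'⟩ = ρP h (eW2 ⟨v, hv⟩) := by
      intro h v hv hv'
      rw [heW2apply, heW2apply, heW h v hv hv', map_smul]
    have hBW2 : ∀ w w' : W, B (w : V) (w' : V) = (dW : ℂ) * b (eW2 w) (eW2 w') := by
      intro w w'
      rw [heW2apply, heW2apply, hb3, hb4, hBWcoe, ← hfac]
      ring
    -- the orthogonal complement
    set Wp : Submodule ℂ V :=
      { carrier := {v | ∀ w ∈ W, B v w = 0}
        add_mem' := by
          intro x y hx hy w hw
          rw [hB1, hx w hw, hy w hw, add_zero]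
        zero_mem' := fun w _ => form_zero_left hB1 w
        smul_mem' := by
          intro c x hx w hw
          rw [hB3, hx w hw, mul_zero] } with hWpdef
    have hWpmem : ∀ v : V, v ∈ Wp ↔ ∀ w ∈ W, B v w = 0 := fun v => Iff.rfl
    obtain ⟨hcompl, hdimWp⟩ := ortho_isCompl σ hσ B hB1 hB2 hB3 hB4 W Wp hWpmem hWnd
    have hWpinv : Invt ρ Wp := by
      intro h v hv
      rw [hWpmem] at hv ⊢
      intro w hw
      have h1 := hBinv h v (ρ h⁻¹ w)
      rw [rep_apply_inv] at h1
      rw [h1]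
      exact hv _ (hWirr.1 h⁻¹ w hw)
    have hWp_right : ∀ v ∈ Wp, ∀ w ∈ W, B w v = 0 := by
      intro v hv w hw
      rw [hBsym v w, (hWpmem v).mp hv w hw, map_zero, mul_zero]
    -- dimension bound for the recursion
    haveI : Nontrivial ↥W :=
      ⟨⟨⟨x, hxW⟩, 0, by simp [Submodule.mk_eq_zero, hx0]⟩⟩
    have hWpos : 0 < finrank ℂ ↥W := Module.finrank_pos
    have hWple : finrank ℂ ↥Wp ≤ n := by
      rw [hdimWp]
      have := Submodule.finrank_le W
      omega
    -- the restricted representation on Wp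
    set ρ' : Representation ℂ H ↥Wp :=
      { toFun := fun h => (ρ h).restrict (p := Wp) (q := Wp) (fun v hv => hWpinv h v hv)
        map_one' := by
          apply LinearMap.ext
          intro x
          apply Subtype.ext
          show ρ 1 (x : V) = (x : V)
          rw [map_one, Module.End.one_apply]
        map_mul' := fun g h => by
          apply LinearMap.ext
          intro x
          apply Subtype.ext
          show ρ (g * h) (x : V) = ρ g (ρ h (x : V))
          rw [map_mul, Module.End.mul_apply] } with hρ'def
    have hρ'coe : ∀ (h : H) (x : ↥Wp), ((ρ' h x : ↥Wp) : V) = ρ h (x : V) :=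
      fun h x => rfl
    -- semisimplicity of the restriction
    have hmapinv : ∀ U : Submodule ℂ ↥Wp, Invt ρ' U →
        Invt ρ (U.map Wp.subtype) := by
      intro U hUinv h v hv
      rw [Submodule.mem_map] at hv ⊢
      obtain ⟨u, hu, rfl⟩ := hv
      exact ⟨ρ' h u, hUinv h u hu, hρ'coe h u⟩
    have hss' : Semisimple ρ' := by
      intro U hUinv
      obtain ⟨C, hCinv, hCcompl⟩ := hss (U.map Wp.subtype) (hmapinv U hUinv)
      refine ⟨Submodule.comap Wp.subtype C, ?_, ?_, ?_⟩
      · intro h u hu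
        rw [Submodule.mem_comap] at hu ⊢
        exact hCinv h (u : V) hu
      · rw [disjoint_iff, Submodule.eq_bot_iff]
        intro u hu
        obtain ⟨huU, huC⟩ := Submodule.mem_inf.mp hu
        have h1 : (u : V) ∈ (U.map Wp.subtype) ⊓ C :=
          ⟨Submodule.mem_map_of_mem huU, huC⟩
        rw [hCcompl.disjoint.eq_bot] at h1
        exact Subtype.ext (Submodule.mem_bot ℂ |>.mp h1)
      · rw [codisjoint_iff, Submodule.eq_top_iff']
        intro xp
        have h1 : (xp : V) ∈ (U.map Wp.subtype) ⊔ C := by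
          rw [hCcompl.codisjoint.eq_top]; trivial
        obtain ⟨y, hyUV, z, hzC, hsum⟩ := Submodule.mem_sup.mp h1
        obtain ⟨u, huU, rfl⟩ := Submodule.mem_map.mp hyUV
        have hzWp : z ∈ Wp := by
          have hz : z = (xp : V) - (u : V) := by
            rw [← hsum, Submodule.coe_subtype]
            abel
          rw [hz]
          exact Wp.sub_mem xp.2 u.2
        have hxp : xp = u + (⟨z, hzWp⟩ : ↥Wp) := by
          apply Subtype.ext
          rw [Submodule.coe_add]
          exact hsum.symm
        rw [hxp]
        exact Submodule.add_mem _ (Submodule.mem_sup_left huU)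
          (Submodule.mem_sup_right (Submodule.mem_comap.mpr hzC))
    -- isotypicality of the restriction
    have hisot' : ∀ U : Submodule ℂ ↥Wp, IrredSub ρ' U →
        RepIsoExt ρ' ρP U := by
      intro U hUirr'
      have hUVinv : Invt ρ (U.map Wp.subtype) := hmapinv U hUirr'.1
      have hUVne : U.map Wp.subtype ≠ ⊥ := by
        obtain ⟨u, huU, hu0⟩ := (Submodule.ne_bot_iff U).mp hUirr'.2.1
        rw [Submodule.ne_bot_iff]
        exact ⟨(u : V), Submodule.mem_map_of_mem huU, fun h => hu0 (Subtype.ext h)⟩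
      have hUVmin : ∀ U'' ≤ U.map Wp.subtype, Invt ρ U'' → U'' = ⊥ ∨ U'' = U.map Wp.subtype := by
        intro U'' hle hinv
        have hU''Wp : U'' ≤ Wp := hle.trans (Submodule.map_subtype_le Wp U)
        have hU''ple : Submodule.comap Wp.subtype U'' ≤ U := by
          intro u hu
          rw [Submodule.mem_comap] at hu
          obtain ⟨u₂, hu₂U, hcoe⟩ := Submodule.mem_map.mp (hle hu)
          exact (Subtype.ext hcoe : u₂ = u) ▸ hu₂U
        have hU''pinv : Invt ρ' (Submodule.comap Wp.subtype U'') := by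
          intro h u hu
          rw [Submodule.mem_comap] at hu ⊢
          exact hinv h (u : V) hu
        rcases hUirr'.2.2 _ hU''ple hU''pinv with h | h
        · left
          rw [Submodule.eq_bot_iff]
          intro v hv
          have hvWp : v ∈ Wp := hU''Wp hv
          have : (⟨v, hvWp⟩ : ↥Wp) ∈ Submodule.comap Wp.subtype U'' :=
            Submodule.mem_comap.mpr hv
          rw [h] at this
          exact congrArg Subtype.val (Submodule.mem_bot ℂ |>.mp this)
        · right
          refine le_antisymm hle ?_
          rintro v hv
          obtain ⟨u, huU, rfl⟩ := Submodule.mem_map.mp hv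
          have : u ∈ Submodule.comap Wp.subtype U'' := by rw [h]; exact huU
          exact Submodule.mem_comap.mp this
      obtain ⟨e, he⟩ := hisot (U.map Wp.subtype) ⟨hUVinv, hUVne, hUVmin⟩
      set eq0 : ↥U ≃ₗ[ℂ] ↥(U.map Wp.subtype) :=
        Submodule.equivMapOfInjective Wp.subtype (Submodule.injective_subtype Wp) U with heq0
      have heq0coe : ∀ y : U, ((eq0 y : ↥(U.map Wp.subtype)) : V) = ((y : ↥Wp) : V) :=
        fun y => rfl
      refine ⟨eq0.trans e, ?_⟩
      intro h v hv hv'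
      show e (eq0 ⟨ρ' h v, hv'⟩) = ρP h (e (eq0 ⟨v, hv⟩))
      have hm1 : ((v : V)) ∈ U.map Wp.subtype := Submodule.mem_map_of_mem hv
      have hm2 : ρ h ((v : V)) ∈ U.map Wp.subtype := hUVinv h _ hm1
      have h1 : eq0 ⟨ρ' h v, hv'⟩ = ⟨ρ h (v : V), hm2⟩ := Subtype.ext (heq0coe _)
      have h2 : eq0 ⟨v, hv⟩ = ⟨(v : V), hm1⟩ := Subtype.ext (heq0coe _)
      rw [h1, h2]
      exact he h (v : V) hm1 hm2
    -- the restricted form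
    set B' : ↥Wp → ↥Wp → ℂ := fun v w => B (v : V) (w : V)
      with hB'def
    have hB'nd : ∀ v : ↥Wp, (∀ w, B' v w = 0) → v = 0 := by
      intro v hv
      apply Subtype.ext
      apply hBnd
      intro z
      have h1 : z ∈ W ⊔ Wp := by rw [hcompl.codisjoint.eq_top]; trivial
      obtain ⟨y, hyW, z', hz'Wp, rfl⟩ := Submodule.mem_sup.mp h1
      rw [hB2]
      have e1 : B (v : V) y = 0 := (hWpmem (v : V)).mp v.2 y hyW
      have e2 : B (v : V) z' = 0 := hv ⟨z', hz'Wp⟩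
      rw [e1, e2, add_zero]
    -- recursion on Wp
    obtain ⟨r', d', hd', Φ', hΦ'equi, hΦ'form⟩ :=
      ih ↥Wp hWple ρ' hss' hisot' B'
        (fun v v' w => by
          show B ((v + v' : ↥Wp) : V) _ = _
          rw [Submodule.coe_add, hB1])
        (fun v w w' => by
          show B _ ((w + w' : ↥Wp) : V) = _
          rw [Submodule.coe_add, hB2])
        (fun a v w => by
          show B ((a • v : ↥Wp) : V) _ = _
          rw [Submodule.coe_smul, hB3])
        (fun a v w => by
          show B _ ((a • w : ↥Wp) : V) = _
          rw [Submodule.coe_smul, hB4])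
        (fun h v w => by
          show B ((ρ' h v : ↥Wp) : V) ((ρ' h w : ↥Wp) : V) = _
          rw [hρ'coe, hρ'coe, hBinv])
        (fun v w => hBsym (v : V) (w : V))
        hB'nd
    -- assembling the final equivalence
    set E : (↥W × ↥Wp) ≃ₗ[ℂ] V :=
      Submodule.prodEquivOfIsCompl W Wp hcompl with hEdef
    set Φ : V ≃ₗ[ℂ] (Fin (r' + 1) → P) :=
      (E.symm.trans (eW2.prodCongr Φ')).trans (consLEquiv r') with hΦdef
    set π₁ : V → ↥W := fun v => (E.symm v).1 with hπ₁def
    set π₂ : V → ↥Wp := fun v => (E.symm v).2 with hπ₂def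
    have hdecomp : ∀ v : V, ((π₁ v : V)) + ((π₂ v : V)) = v := by
      intro v
      have h1 : E (E.symm v) = v := E.apply_symm_apply v
      rw [hEdef, Submodule.coe_prodEquivOfIsCompl'] at h1
      exact h1
    have huniq : ∀ (v : V) (x : ↥W) (y : ↥Wp),
        (x : V) + (y : V) = v → π₁ v = x ∧ π₂ v = y := by
      intro v x y hxy
      have h1 : E.symm v = (x, y) := by
        rw [LinearEquiv.symm_apply_eq, hEdef, Submodule.coe_prodEquivOfIsCompl']
        exact hxy.symm
      exact ⟨congrArg Prod.fst h1, congrArg Prod.snd h1⟩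
    have hΦ0 : ∀ v : V, Φ v 0 = eW2 (π₁ v) := by
      intro v
      show consLEquiv r' ((eW2.prodCongr Φ') (E.symm v)) 0 = _
      rw [consLEquiv_apply_zero]
      rfl
    have hΦsucc : ∀ (v : V) (i : Fin r'), Φ v i.succ = Φ' (π₂ v) i := by
      intro v i
      show consLEquiv r' ((eW2.prodCongr Φ') (E.symm v)) i.succ = _
      rw [consLEquiv_apply_succ]
      rfl
    refine ⟨r' + 1, Fin.cons dW d', ?_, Φ, ?_, ?_⟩
    · intro i
      refine Fin.cases ?_ ?_ i
      · rw [Fin.cons_zero]; exact hdW0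
      · intro j; rw [Fin.cons_succ]; exact hd' j
    · -- equivariance
      intro h v i
      have hdec := hdecomp v
      have hsum : ((⟨ρ h (π₁ v : V), hWirr.1 h _ (π₁ v).2⟩ : ↥W) : V)
          + ((⟨ρ h (π₂ v : V), hWpinv h _ (π₂ v).2⟩ : ↥Wp) : V) = ρ h v := by
        show ρ h (π₁ v : V) + ρ h (π₂ v : V) = ρ h v
        rw [← map_add, hdec]
      obtain ⟨hq1, hq2⟩ := huniq (ρ h v) _ _ hsum
      refine Fin.cases ?_ ?_ i
      · rw [hΦ0, hΦ0, hq1]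
        exact heW2 h (π₁ v : V) (π₁ v).2 (hWirr.1 h _ (π₁ v).2)
      · intro j
        rw [hΦsucc, hΦsucc, hq2]
        have : (⟨ρ h (π₂ v : V), hWpinv h _ (π₂ v).2⟩ : ↥Wp) = ρ' h (π₂ v) :=
          Subtype.ext rfl
        rw [this]
        exact hΦ'equi h (π₂ v) j
    · -- the form
      intro v w
      have hdv := hdecomp v
      have hdw := hdecomp w
      have hexp : B v w = B (π₁ v : V) (π₁ w : V) + B (π₂ v : V) (π₂ w : V) := by
        conv_lhs => rw [← hdv, ← hdw]
        rw [hB1, hB2, hB2]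
        have e1 : B (π₁ v : V) (π₂ w : V) = 0 := by
          rw [hBsym, (hWpmem _).mp (π₂ w).2 _ (π₁ v).2, map_zero, mul_zero]
        have e2 : B (π₂ v : V) (π₁ w : V) = 0 := (hWpmem _).mp (π₂ v).2 _ (π₁ w).2
        rw [e1, e2]
        ring
      rw [hexp, Fin.sum_univ_succ]
      congr 1
      · rw [Fin.cons_zero, hΦ0, hΦ0]
        exact hBW2 (π₁ v) (π₁ w)
      · have hf := hΦ'form (π₂ v) (π₂ w)
        simp only [hB'def] at hf
        rw [hf]
        refine Finset.sum_congr rfl fun j _ => ?_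
        rw [Fin.cons_succ, hΦsucc, hΦsucc]

end Main

/-- Let `(V,B)` be an isotypical `H`-module of type `π` with an invariant
nondegenerate `(ι,ε)`-symmetric form, where `π` itself carries an invariant nondegenerate
`(ι,ε)`-symmetric form `b`. Then `(V,B)` is `H`-equivariantly isometric to
`(π ⊗ ℂ^r, b ⊗ D)` for some invertible real diagonal matrix `D`, i.e. to the orthogonal
direct sum of the modules `(π, d_i·b)`. -/
theorem stmt_8 [Group H] [AddCommGroup V] [Module ℂ V] [FiniteDimensional ℂ V]
    [AddCommGroup P] [Module ℂ P] [FiniteDimensional ℂ P]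
    (σ : ℂ →+* ℂ) (hσ : σ = RingHom.id ℂ ∨ σ = starRingEnd ℂ)
    (ε : ℂ) (hε : ε = 1 ∨ ε = -1)
    (ρ : Representation ℂ H V) (hss : Semisimple ρ)
    (ρP : Representation ℂ H P)
    (hPss : ∀ U : Submodule ℂ P, (∀ (h : H) (v : P), v ∈ U → ρP h v ∈ U) →
      ∃ U', (∀ (h : H) (v : P), v ∈ U' → ρP h v ∈ U') ∧ IsCompl U U')
    (hPirr : ∀ U : Submodule ℂ P, (∀ (h : H) (v : P), v ∈ U → ρP h v ∈ U) →
      U = ⊥ ∨ U = ⊤)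
    -- V is isotypical of type π
    (hisot : ∀ U : Submodule ℂ V, IrredSub ρ U → RepIsoExt ρ ρP U)
    -- b is an invariant nondegenerate (ι,ε)-symmetric form on π
    (b : P → P → ℂ)
    (hb1 : ∀ v v' w, b (v + v') w = b v w + b v' w)
    (hb2 : ∀ v w w', b v (w + w') = b v w + b v w')
    (hb3 : ∀ (a : ℂ) (v w : P), b (a • v) w = σ a * b v w)
    (hb4 : ∀ (a : ℂ) (v w : P), b v (a • w) = a * b v w)
    (hbinv : ∀ (h : H) (v w : P), b (ρP h v) (ρP h w) = b v w)
    (hbsym : ∀ v w, b w v = ε * σ (b v w))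
    (hbnd : ∀ v, (∀ w, b v w = 0) → v = 0)
    -- B is an invariant nondegenerate (ι,ε)-symmetric form on V
    (B : V → V → ℂ)
    (hB1 : ∀ v v' w, B (v + v') w = B v w + B v' w)
    (hB2 : ∀ v w w', B v (w + w') = B v w + B v w')
    (hB3 : ∀ (a : ℂ) (v w : V), B (a • v) w = σ a * B v w)
    (hB4 : ∀ (a : ℂ) (v w : V), B v (a • w) = a * B v w)
    (hBinv : ∀ (h : H) (v w : V), B (ρ h v) (ρ h w) = B v w)
    (hBsym : ∀ v w, B w v = ε * σ (B v w))
    (hBnd : ∀ v, (∀ w, B v w = 0) → v = 0) :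
    ∃ (r : ℕ) (d : Fin r → ℝ), (∀ i, d i ≠ 0) ∧
      ∃ Φ : V ≃ₗ[ℂ] (Fin r → P),
        -- Φ is H-equivariant for the diagonal action on π^{⊕r}
        (∀ (h : H) (v : V) (i : Fin r), Φ (ρ h v) i = ρP h (Φ v i)) ∧
        -- Φ carries B to the orthogonal direct sum of the forms d_i·b
        (∀ v w : V, B v w = ∑ i, (d i : ℂ) * b (Φ v i) (Φ w i)) := by
  exact aux σ hσ ε hε ρP hPirr b hb1 hb2 hb3 hb4 hbinv hbsym hbnd
    (Module.finrank ℂ V) V le_rfl ρ hss hisot B hB1 hB2 hB3 hB4 hBinv hBsym hBnd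
end

section
/- Let n = p + q and let D be the diagonal n×n matrix with p entries equal to 1 and q entries equal to −1, so that the Hermitian form v ↦ conj(v)^⊤ D v on ℂⁿ has signature s = p − q. On the space Mat_n(ℂ), viewed as the space of complex bilinear forms on ℂⁿ, define the Hermitian form S(b, b') = Trace(conj(b)^⊤ D^{-1} b' D^{-1}). Then: (a) the signature of S on all of Mat_n(ℂ) equals s²; (b) the signature of S restricted to symmetric matrices (b^⊤ = b) equals (s² + n)/2; (c) the signature of S restricted to skew-symmetric matrices (b^⊤ = −b) equals (s² − n)/2. -/
open Module Matrix

/-- The matrix `D = diag(1,…,1,−1,…,−1)` with `p` ones and `q` minus ones. -/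
noncomputable def sigD (p q : ℕ) : Matrix (Fin (p + q)) (Fin (p + q)) ℂ :=
  Matrix.diagonal (fun i => if (i : ℕ) < p then 1 else -1)

/-- The Hermitian form `S(b,b') = Trace(conj(b)ᵀ D⁻¹ b' D⁻¹)` on `n × n` complex matrices,
viewed as the space of complex bilinear forms on `ℂⁿ` with the Hermitian form of
signature `p − q`. -/
noncomputable def bilFormHerm (p q : ℕ)
    (b b' : Matrix (Fin (p + q)) (Fin (p + q)) ℂ) : ℂ :=
  ((b.map (starRingEnd ℂ))ᵀ * (sigD p q)⁻¹ * b' * (sigD p q)⁻¹).trace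

section quad
variable (p q : ℕ)

lemma sigD_inv : (sigD p q)⁻¹ = sigD p q := by
  apply Matrix.inv_eq_right_inv
  rw [sigD, Matrix.diagonal_mul_diagonal]
  have : (fun i : Fin (p + q) => (if (i : ℕ) < p then (1:ℂ) else -1) *
      (if (i : ℕ) < p then 1 else -1)) = fun _ => 1 := by
    funext i; split <;> ring
  rw [this, Matrix.diagonal_one]

lemma quad (b : Matrix (Fin (p + q)) (Fin (p + q)) ℂ) :
    (bilFormHerm p q b b).re = ∑ x : Fin (p + q) × Fin (p + q),
      (if ((x.1 : ℕ) < p ↔ (x.2 : ℕ) < p) then (1:ℝ) else -1) * Complex.normSq (b x.1 x.2) := by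
  rw [bilFormHerm, sigD_inv]
  rw [show sigD p q = Matrix.diagonal (fun i : Fin (p+q) => if (i : ℕ) < p then (1:ℂ) else -1)
    from rfl]
  simp only [Matrix.trace, Matrix.diag, Matrix.mul_apply, Matrix.transpose_apply,
    Matrix.map_apply, Matrix.diagonal_apply, mul_ite, ite_mul, mul_zero, zero_mul,
    Finset.sum_ite_eq, Finset.sum_ite_eq', Finset.mem_univ, if_true]
  rw [Fintype.sum_prod_type]
  rw [Finset.sum_comm]
  dsimp only
  have key : ∀ z : ℂ, ((starRingEnd ℂ) z * z).re = Complex.normSq z := by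
    intro z; rw [mul_comm, Complex.mul_conj, Complex.ofReal_re]
  have key2 : ∀ z : ℂ, ((starRingEnd ℂ) z * -1 * z).re = -Complex.normSq z := by
    intro z
    have h : (starRingEnd ℂ) z * -1 * z = -((starRingEnd ℂ) z * z) := by ring
    rw [h, Complex.neg_re, key]
  rw [Complex.re_sum]
  apply Finset.sum_congr rfl
  intro i _
  by_cases hi : (i : ℕ) < p
  · rw [if_pos hi, mul_one]
    rw [Complex.re_sum]
    apply Finset.sum_congr rfl
    intro x _
    by_cases hx : (x : ℕ) < p
    · rw [if_pos hx, if_pos (iff_of_true hx hi), mul_one, key, one_mul]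
    · rw [if_neg hx, if_neg (by tauto), key2, neg_one_mul]
  · rw [if_neg hi, mul_neg_one, Complex.neg_re, Complex.re_sum, ← Finset.sum_neg_distrib]
    apply Finset.sum_congr rfl
    intro x _
    by_cases hx : (x : ℕ) < p
    · rw [if_pos hx, if_neg (by tauto), mul_one, key, neg_one_mul]
    · rw [if_neg hx, if_pos (iff_of_false hx hi), key2, neg_neg, one_mul]

end quad


section general
variable {n : ℕ}

/-- Submodule of matrices supported on a pattern `P`. -/
noncomputable def msupp (P : Fin n → Fin n → Prop) [∀ i j, Decidable (P i j)] :
    Submodule ℂ (Matrix (Fin n) (Fin n) ℂ) where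
  carrier := {b | ∀ i j, ¬ P i j → b i j = 0}
  add_mem' := by
    intro a b ha hb i j h
    simp [Matrix.add_apply, ha i j h, hb i j h]
  zero_mem' := by intro i j h; rfl
  smul_mem' := by
    intro c b hb i j h
    simp [Matrix.smul_apply, hb i j h]

noncomputable def msuppEquiv (P : Fin n → Fin n → Prop) [∀ i j, Decidable (P i j)] :
    msupp P ≃ₗ[ℂ] ({x : Fin n × Fin n // P x.1 x.2} → ℂ) where
  toFun b := fun x => (b : Matrix (Fin n) (Fin n) ℂ) x.1.1 x.1.2
  map_add' := by intro a b; rfl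
  map_smul' := by intro c b; rfl
  invFun f := ⟨Matrix.of fun i j => if h : P i j then f ⟨(i, j), h⟩ else 0,
    fun i j hij => dif_neg hij⟩
  left_inv := by
    rintro ⟨b, hb⟩
    apply Subtype.ext
    funext i j
    by_cases h : P i j
    · exact dif_pos h
    · exact (dif_neg h).trans (hb i j h).symm
  right_inv := by
    rintro f
    funext x
    obtain ⟨⟨i, j⟩, hx⟩ := x
    exact dif_pos hx

lemma finrank_msupp (P : Fin n → Fin n → Prop) [∀ i j, Decidable (P i j)] :
    finrank ℂ (msupp P) = Fintype.card {x : Fin n × Fin n // P x.1 x.2} := by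
  rw [(msuppEquiv P).finrank_eq, Module.finrank_fintype_fun_eq_card]

/-- Symmetric matrices. -/
noncomputable def symS (n : ℕ) : Submodule ℂ (Matrix (Fin n) (Fin n) ℂ) where
  carrier := {b | bᵀ = b}
  add_mem' := by
    intro a b ha hb
    simp only [Set.mem_setOf_eq, Matrix.transpose_add] at *
    rw [ha, hb]
  zero_mem' := Matrix.transpose_zero
  smul_mem' := by
    intro c b hb
    simp only [Set.mem_setOf_eq, Matrix.transpose_smul] at *
    rw [hb]

/-- Skew-symmetric matrices. -/
noncomputable def skewS (n : ℕ) : Submodule ℂ (Matrix (Fin n) (Fin n) ℂ) where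
  carrier := {b | bᵀ = -b}
  add_mem' := by
    intro a b ha hb
    simp only [Set.mem_setOf_eq, Matrix.transpose_add] at *
    rw [ha, hb]
    abel
  zero_mem' := by simp
  smul_mem' := by
    intro c b hb
    simp only [Set.mem_setOf_eq, Matrix.transpose_smul] at *
    rw [hb]
    simp

/-- entrywise projection onto a pattern. -/
noncomputable def eproj (P : Fin n → Fin n → Prop) [∀ i j, Decidable (P i j)]
    (b : Matrix (Fin n) (Fin n) ℂ) : Matrix (Fin n) (Fin n) ℂ :=
  Matrix.of fun i j => if P i j then b i j else 0

lemma eproj_mem (P : Fin n → Fin n → Prop) [∀ i j, Decidable (P i j)]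
    (b : Matrix (Fin n) (Fin n) ℂ) : eproj P b ∈ msupp P := by
  intro i j h; simp [eproj, h]

lemma eproj_transpose (P : Fin n → Fin n → Prop) [∀ i j, Decidable (P i j)]
    (hP : ∀ i j, P i j ↔ P j i) (b : Matrix (Fin n) (Fin n) ℂ) :
    (eproj P b)ᵀ = eproj P bᵀ := by
  ext i j
  simp only [Matrix.transpose_apply, eproj, Matrix.of_apply, hP i j]

lemma eproj_symm (P : Fin n → Fin n → Prop) [∀ i j, Decidable (P i j)]
    (hP : ∀ i j, P i j ↔ P j i) (b : Matrix (Fin n) (Fin n) ℂ) (hb : bᵀ = b) :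
    (eproj P b)ᵀ = eproj P b := by
  rw [eproj_transpose P hP, hb]

lemma eproj_skew (P : Fin n → Fin n → Prop) [∀ i j, Decidable (P i j)]
    (hP : ∀ i j, P i j ↔ P j i) (b : Matrix (Fin n) (Fin n) ℂ) (hb : bᵀ = -b) :
    (eproj P b)ᵀ = -(eproj P b) := by
  rw [eproj_transpose P hP, hb]
  ext i j
  simp only [eproj, Matrix.of_apply, Matrix.neg_apply]
  split <;> simp

lemma eproj_split (P₁ P₂ : Fin n → Fin n → Prop) [∀ i j, Decidable (P₁ i j)]
    [∀ i j, Decidable (P₂ i j)]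
    (hdisj : ∀ i j, ¬ (P₁ i j ∧ P₂ i j)) (b : Matrix (Fin n) (Fin n) ℂ)
    (hb : ∀ i j, ¬ P₁ i j → ¬ P₂ i j → b i j = 0) :
    b = eproj P₁ b + eproj P₂ b := by
  ext i j
  simp only [Matrix.add_apply, eproj, Matrix.of_apply]
  by_cases h1 : P₁ i j
  · rw [if_pos h1, if_neg (fun h2 => hdisj i j ⟨h1, h2⟩), add_zero]
  · by_cases h2 : P₂ i j
    · rw [if_neg h1, if_pos h2, zero_add]
    · rw [if_neg h1, if_neg h2, hb i j h1 h2, add_zero]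

end general

section twist
variable {n : ℕ}

noncomputable def tw (b : Matrix (Fin n) (Fin n) ℂ) : Matrix (Fin n) (Fin n) ℂ :=
  Matrix.of fun i j => if i ≤ j then b i j else -b i j

lemma tw_tw (b : Matrix (Fin n) (Fin n) ℂ) : tw (tw b) = b := by
  ext i j
  simp only [tw, Matrix.of_apply]
  split <;> simp

lemma tw_add (a b : Matrix (Fin n) (Fin n) ℂ) : tw (a + b) = tw a + tw b := by
  ext i j
  simp only [tw, Matrix.of_apply, Matrix.add_apply]
  split <;> ring

lemma tw_smul (c : ℂ) (b : Matrix (Fin n) (Fin n) ℂ) : tw (c • b) = c • tw b := by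
  ext i j
  simp only [tw, Matrix.of_apply, Matrix.smul_apply, smul_eq_mul]
  split <;> ring

variable (P : Fin n → Fin n → Prop) [∀ i j, Decidable (P i j)]

lemma tw_mem {b : Matrix (Fin n) (Fin n) ℂ} (hb : b ∈ msupp P) : tw b ∈ msupp P := by
  intro i j h
  simp only [tw, Matrix.of_apply, hb i j h]
  split <;> simp

lemma transpose_apply' (b : Matrix (Fin n) (Fin n) ℂ) (h : bᵀ = -b) (i j : Fin n) :
    b j i = -b i j := by
  have := congrFun (congrFun h i) j
  simpa [Matrix.transpose_apply, Matrix.neg_apply] using this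

lemma tw_symm_of_skew (hd : ∀ i, ¬ P i i) {b : Matrix (Fin n) (Fin n) ℂ}
    (hb : b ∈ msupp P) (hs : bᵀ = -b) : (tw b)ᵀ = tw b := by
  ext i j
  simp only [Matrix.transpose_apply, tw, Matrix.of_apply]
  by_cases hij : i = j
  · subst hij
    simp [hb i i (hd i)]
  · by_cases h1 : j ≤ i
    · have h2 : ¬ i ≤ j := fun h => hij (le_antisymm h h1)
      rw [if_pos h1, if_neg h2, transpose_apply' b hs i j]
    · have h2 : i ≤ j := le_of_not_ge h1
      rw [if_neg h1, if_pos h2, transpose_apply' b hs i j, neg_neg]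

lemma tw_skew_of_symm (hd : ∀ i, ¬ P i i) {b : Matrix (Fin n) (Fin n) ℂ}
    (hb : b ∈ msupp P) (hs : bᵀ = b) : (tw b)ᵀ = -(tw b) := by
  ext i j
  simp only [Matrix.transpose_apply, tw, Matrix.of_apply, Matrix.neg_apply]
  have hsym : ∀ i j, b j i = b i j := fun i j => by simpa using (congrFun (congrFun hs j) i).symm
  by_cases hij : i = j
  · subst hij
    simp [hb i i (hd i)]
  · by_cases h1 : j ≤ i
    · have h2 : ¬ i ≤ j := fun h => hij (le_antisymm h h1)
      rw [if_pos h1, if_neg h2, hsym i j, neg_neg]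
    · have h2 : i ≤ j := le_of_not_ge h1
      rw [if_neg h1, if_pos h2, hsym i j]

noncomputable def twEquiv (hd : ∀ i, ¬ P i i) :
    ↥(msupp P ⊓ skewS n) ≃ₗ[ℂ] ↥(msupp P ⊓ symS n) where
  toFun x := ⟨tw x.1, Submodule.mem_inf.2
    ⟨tw_mem P (Submodule.mem_inf.1 x.2).1,
     tw_symm_of_skew P hd (Submodule.mem_inf.1 x.2).1 (Submodule.mem_inf.1 x.2).2⟩⟩
  map_add' := by intro a b; exact Subtype.ext (tw_add a.1 b.1)
  map_smul' := by intro c b; exact Subtype.ext (tw_smul c b.1)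
  invFun x := ⟨tw x.1, Submodule.mem_inf.2
    ⟨tw_mem P (Submodule.mem_inf.1 x.2).1,
     tw_skew_of_symm P hd (Submodule.mem_inf.1 x.2).1 (Submodule.mem_inf.1 x.2).2⟩⟩
  left_inv := by intro x; exact Subtype.ext (tw_tw x.1)
  right_inv := by intro x; exact Subtype.ext (tw_tw x.1)

end twist

section cards
variable (p q : ℕ)

lemma cardLT : Fintype.card {j : Fin (p + q) // (j : ℕ) < p} = p := by
  rw [Fintype.card_congr (⟨fun j => (⟨j.1.1, j.2⟩ : Fin p),
    fun k => ⟨⟨k.1, Nat.lt_of_lt_of_le k.2 (Nat.le_add_right p q)⟩, k.2⟩,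
    fun j => rfl, fun k => rfl⟩ : {j : Fin (p + q) // (j : ℕ) < p} ≃ Fin p)]
  exact Fintype.card_fin p

lemma cardGE : Fintype.card {j : Fin (p + q) // ¬ (j : ℕ) < p} = q := by
  rw [Fintype.card_subtype_compl, cardLT, Fintype.card_fin]
  omega

lemma cardT :
    Fintype.card {x : Fin (p + q) × Fin (p + q) // ((x.1 : ℕ) < p ↔ (x.2 : ℕ) < p)}
      = p * p + q * q := by
  rw [Fintype.card_congr (Equiv.subtypeProdEquivSigmaSubtype
    (fun i j : Fin (p + q) => ((i : ℕ) < p ↔ (j : ℕ) < p))), Fintype.card_sigma]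
  have hrow : ∀ i : Fin (p + q),
      Fintype.card {j : Fin (p + q) // ((i : ℕ) < p ↔ (j : ℕ) < p)}
        = if (i : ℕ) < p then p else q := by
    intro i
    by_cases h : (i : ℕ) < p
    · rw [if_pos h]
      exact (Fintype.card_congr (Equiv.subtypeEquivRight (fun j => by simp [h]))).trans
        (cardLT p q)
    · rw [if_neg h]
      exact (Fintype.card_congr (Equiv.subtypeEquivRight (fun j => by simp [h]))).trans
        (cardGE p q)
  rw [Finset.sum_congr rfl (fun i _ => hrow i)]
  rw [Finset.sum_ite, Finset.sum_const, Finset.sum_const, smul_eq_mul, smul_eq_mul]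
  have h1 : (Finset.univ.filter (fun i : Fin (p + q) => (i : ℕ) < p)).card = p := by
    rw [← Fintype.card_subtype, cardLT]
  have h2 : (Finset.univ.filter (fun i : Fin (p + q) => ¬ (i : ℕ) < p)).card = q := by
    rw [← Fintype.card_subtype, cardGE]
  rw [h1, h2]

lemma cardNT :
    Fintype.card {x : Fin (p + q) × Fin (p + q) // ¬ ((x.1 : ℕ) < p ↔ (x.2 : ℕ) < p)}
      = 2 * (p * q) := by
  rw [Fintype.card_subtype_compl, cardT, Fintype.card_prod, Fintype.card_fin]
  have h : (p + q) * (p + q) = 2 * (p * q) + (p * p + q * q) := by ring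
  rw [h, Nat.add_sub_cancel]

lemma cardDiag (n : ℕ) : Fintype.card {x : Fin n × Fin n // x.1 = x.2} = n := by
  rw [Fintype.card_congr (⟨fun x => x.1.1, fun i => ⟨(i, i), rfl⟩,
    fun x => by obtain ⟨⟨a, b⟩, h⟩ := x; cases h; rfl, fun i => rfl⟩ :
    {x : Fin n × Fin n // x.1 = x.2} ≃ Fin n)]
  exact Fintype.card_fin n

end cards

section defin
variable (p q : ℕ)

lemma exists_entry_ne {n : ℕ} {b : Matrix (Fin n) (Fin n) ℂ} (hb : b ≠ 0) :
    ∃ i j, b i j ≠ 0 := by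
  by_contra h
  push_neg at h
  exact hb (Matrix.ext fun i j => h i j)

lemma quad_pos {b : Matrix (Fin (p + q)) (Fin (p + q)) ℂ}
    (hb : b ∈ msupp (fun i j : Fin (p + q) => ((i : ℕ) < p ↔ (j : ℕ) < p)))
    (hb0 : b ≠ 0) : 0 < (bilFormHerm p q b b).re := by
  rw [quad]
  obtain ⟨i0, j0, h0⟩ := exists_entry_ne hb0
  apply Finset.sum_pos'
  · intro x _
    by_cases hx : ((x.1 : ℕ) < p ↔ (x.2 : ℕ) < p)
    · rw [if_pos hx, one_mul]
      exact Complex.normSq_nonneg _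
    · rw [hb x.1 x.2 hx, map_zero, mul_zero]
  · refine ⟨(i0, j0), Finset.mem_univ _, ?_⟩
    have ht : ((i0 : ℕ) < p ↔ (j0 : ℕ) < p) := by
      by_contra hx
      exact h0 (hb i0 j0 hx)
    rw [if_pos ht, one_mul]
    exact Complex.normSq_pos.2 h0

lemma quad_neg {b : Matrix (Fin (p + q)) (Fin (p + q)) ℂ}
    (hb : b ∈ msupp (fun i j : Fin (p + q) => ¬ ((i : ℕ) < p ↔ (j : ℕ) < p)))
    (hb0 : b ≠ 0) : (bilFormHerm p q b b).re < 0 := by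
  rw [quad]
  obtain ⟨i0, j0, h0⟩ := exists_entry_ne hb0
  have : ∀ x ∈ (Finset.univ : Finset (Fin (p + q) × Fin (p + q))),
      (if ((x.1 : ℕ) < p ↔ (x.2 : ℕ) < p) then (1:ℝ) else -1) * Complex.normSq (b x.1 x.2)
        = -(Complex.normSq (b x.1 x.2)) := by
    intro x _
    by_cases hx : ((x.1 : ℕ) < p ↔ (x.2 : ℕ) < p)
    · rw [if_pos hx, hb x.1 x.2 (not_not_intro hx), map_zero, mul_zero, neg_zero]
    · rw [if_neg hx, neg_one_mul]
  rw [Finset.sum_congr rfl this, Finset.sum_neg_distrib]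
  have hpos : 0 < ∑ x : Fin (p + q) × Fin (p + q), Complex.normSq (b x.1 x.2) :=
    Finset.sum_pos' (fun x _ => Complex.normSq_nonneg _)
      ⟨(i0, j0), Finset.mem_univ _, Complex.normSq_pos.2 h0⟩
  linarith

end defin
section structure_lemmas
variable {n : ℕ}

lemma mem_symS {b : Matrix (Fin n) (Fin n) ℂ} : b ∈ symS n ↔ bᵀ = b := Iff.rfl
lemma mem_skewS {b : Matrix (Fin n) (Fin n) ℂ} : b ∈ skewS n ↔ bᵀ = -b := Iff.rfl
lemma mem_msupp {P : Fin n → Fin n → Prop} [∀ i j, Decidable (P i j)]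
    {b : Matrix (Fin n) (Fin n) ℂ} : b ∈ msupp P ↔ ∀ i j, ¬ P i j → b i j = 0 := Iff.rfl

lemma msupp_mono {P Q : Fin n → Fin n → Prop} [∀ i j, Decidable (P i j)]
    [∀ i j, Decidable (Q i j)] (h : ∀ i j, P i j → Q i j) : msupp P ≤ msupp Q :=
  fun b hb i j hq => hb i j (fun hp => hq (h i j hp))

lemma transpose_mem_msupp {P : Fin n → Fin n → Prop} [∀ i j, Decidable (P i j)]
    (hP : ∀ i j, P i j ↔ P j i) {b : Matrix (Fin n) (Fin n) ℂ} (hb : b ∈ msupp P) :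
    bᵀ ∈ msupp P := by
  intro i j h
  exact hb j i (fun hp => h ((hP i j).2 hp))

lemma symskew_inf {P : Fin n → Fin n → Prop} [∀ i j, Decidable (P i j)] :
    (msupp P ⊓ symS n) ⊓ (msupp P ⊓ skewS n) = ⊥ := by
  rw [eq_bot_iff]
  intro b hb
  obtain ⟨h1', h2'⟩ := Submodule.mem_inf.1 hb
  have h1 : bᵀ = b := (Submodule.mem_inf.1 h1').2
  have h2 : bᵀ = -b := (Submodule.mem_inf.1 h2').2
  have hbb : b = -b := h1.symm.trans h2
  have h2b : (2 : ℂ) • b = 0 := by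
    rw [two_smul]
    nth_rewrite 1 [hbb]
    exact neg_add_cancel b
  have : b = 0 := by
    rcases smul_eq_zero.1 h2b with h | h
    · exact absurd h two_ne_zero
    · exact h
  simp [this]

lemma symskew_sup {P : Fin n → Fin n → Prop} [∀ i j, Decidable (P i j)]
    (hP : ∀ i j, P i j ↔ P j i) :
    (msupp P ⊓ symS n) ⊔ (msupp P ⊓ skewS n) = msupp P := by
  apply le_antisymm (sup_le inf_le_left inf_le_left)
  intro b hb
  have hbt : bᵀ ∈ msupp P := transpose_mem_msupp hP hb
  have hsum : b = (2⁻¹ : ℂ) • (b + bᵀ) + (2⁻¹ : ℂ) • (b - bᵀ) := by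
    ext i j
    simp only [Matrix.add_apply, Matrix.smul_apply, Matrix.sub_apply, Matrix.transpose_apply,
      smul_eq_mul]
    ring
  rw [hsum]
  apply Submodule.add_mem_sup
  · exact Submodule.mem_inf.2 ⟨Submodule.smul_mem _ _ (Submodule.add_mem _ hb hbt),
      mem_symS.2 (by rw [Matrix.transpose_smul, Matrix.transpose_add, Matrix.transpose_transpose,
        add_comm])⟩
  · exact Submodule.mem_inf.2 ⟨Submodule.smul_mem _ _ (Submodule.sub_mem _ hb hbt),
      mem_skewS.2 (by rw [Matrix.transpose_smul, Matrix.transpose_sub, Matrix.transpose_transpose, ← smul_neg,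
        neg_sub])⟩

end structure_lemmas
section spec
variable (p q : ℕ)

local notation "tP" => fun i j : Fin (p + q) => ((i : ℕ) < p ↔ (j : ℕ) < p)
local notation "ntP" => fun i j : Fin (p + q) => ¬ ((i : ℕ) < p ↔ (j : ℕ) < p)
local notation "tP'" => fun i j : Fin (p + q) => (((i : ℕ) < p ↔ (j : ℕ) < p) ∧ i ≠ j)
local notation "dg" => fun i j : Fin (p + q) => i = j

lemma tP_symm : ∀ i j : Fin (p + q), (tP) i j ↔ (tP) j i := fun i j => Iff.comm
lemma ntP_symm : ∀ i j : Fin (p + q), (ntP) i j ↔ (ntP) j i := fun i j => not_congr Iff.comm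
lemma tP'_symm : ∀ i j : Fin (p + q), (tP') i j ↔ (tP') j i := by
  intro i j
  constructor
  · rintro ⟨h1, h2⟩; exact ⟨h1.symm, h2.symm⟩
  · rintro ⟨h1, h2⟩; exact ⟨h1.symm, h2.symm⟩
lemma ntP_nodiag : ∀ i : Fin (p + q), ¬ (ntP) i i := fun i h => h Iff.rfl
lemma tP'_nodiag : ∀ i : Fin (p + q), ¬ (tP') i i := fun i h => h.2 rfl

lemma msupp_dg_le_symS : msupp (dg) ≤ symS (p + q) := by
  intro b hb
  rw [mem_symS]
  ext i j
  rw [Matrix.transpose_apply]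
  by_cases h : i = j
  · subst h; rfl
  · rw [hb j i (fun hh => h hh.symm), hb i j h]

lemma decomp_sup :
    (msupp (tP') ⊓ symS (p + q)) ⊔ msupp (dg) = msupp (tP) ⊓ symS (p + q) := by
  apply le_antisymm
  · apply sup_le
    · exact inf_le_inf_right _ (msupp_mono (fun i j h => h.1))
    · exact le_inf (msupp_mono (fun i j h => by rw [h])) (msupp_dg_le_symS p q)
  · intro b hb
    obtain ⟨hb1, hb2⟩ := Submodule.mem_inf.1 hb
    have hsplit : b = eproj (tP') b + eproj (dg) b := by
      apply eproj_split
      · intro i j h; exact h.1.2 h.2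
      · intro i j h1 h2
        exact hb1 i j (fun ht => h1 ⟨ht, h2⟩)
    rw [hsplit]
    exact Submodule.add_mem_sup
      (Submodule.mem_inf.2 ⟨eproj_mem _ b, mem_symS.2 (eproj_symm _ (tP'_symm p q) b hb2)⟩)
      (eproj_mem _ b)

lemma decomp_inf : (msupp (tP') ⊓ symS (p + q)) ⊓ msupp (dg) = ⊥ := by
  rw [eq_bot_iff]
  intro b hb
  obtain ⟨hb1, hb2⟩ := Submodule.mem_inf.1 hb
  have hb1' := (Submodule.mem_inf.1 hb1).1
  have : b = 0 := by
    ext i j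
    by_cases h : i = j
    · exact h ▸ hb1' i i (tP'_nodiag p q i)
    · exact hb2 i j h
  simp [this]

lemma skew_eq : msupp (tP) ⊓ skewS (p + q) = msupp (tP') ⊓ skewS (p + q) := by
  apply le_antisymm
  · intro b hb
    obtain ⟨hb1, hb2⟩ := Submodule.mem_inf.1 hb
    refine Submodule.mem_inf.2 ⟨?_, hb2⟩
    intro i j h
    by_cases ht : ((i : ℕ) < p ↔ (j : ℕ) < p)
    · have hij : i = j := by
        by_contra hij
        exact h ⟨ht, hij⟩
      subst hij
      have := transpose_apply' b (mem_skewS.1 hb2) i i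
      have h2 : b i i + b i i = 0 := by nth_rewrite 1 [this]; exact neg_add_cancel _
      exact add_self_eq_zero.1 h2
    · exact hb1 i j ht
  · exact inf_le_inf_right _ (msupp_mono (fun i j h => h.1))

end spec

/-- With `s = p − q` and `n = p + q`, the Hermitian form
`S(b,b') = Trace(conj(b)ᵀ D⁻¹ b' D⁻¹)` on `Mat_n(ℂ)` has signature `s²`; restricted to
symmetric matrices it has signature `(s² + n)/2`, and restricted to skew-symmetric matrices
it has signature `(s² − n)/2`. -/
theorem stmt_14 (p q : ℕ) :
    -- (a) signature on all of `Mat_n(ℂ)` is `s²`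
    (∃ Wp Wn : Submodule ℂ (Matrix (Fin (p + q)) (Fin (p + q)) ℂ), IsCompl Wp Wn ∧
      (∀ b ∈ Wp, b ≠ 0 → 0 < (bilFormHerm p q b b).re) ∧
      (∀ b ∈ Wn, b ≠ 0 → (bilFormHerm p q b b).re < 0) ∧
      (finrank ℂ Wp : ℤ) - (finrank ℂ Wn : ℤ) = ((p : ℤ) - q) ^ 2) ∧
    -- (b) signature on symmetric matrices is `(s² + n)/2`
    (∃ Wp Wn : Submodule ℂ (Matrix (Fin (p + q)) (Fin (p + q)) ℂ),
      (∀ b ∈ Wp, bᵀ = b) ∧ (∀ b ∈ Wn, bᵀ = b) ∧ Disjoint Wp Wn ∧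
      (∀ b : Matrix (Fin (p + q)) (Fin (p + q)) ℂ, bᵀ = b → b ∈ Wp ⊔ Wn) ∧
      (∀ b ∈ Wp, b ≠ 0 → 0 < (bilFormHerm p q b b).re) ∧
      (∀ b ∈ Wn, b ≠ 0 → (bilFormHerm p q b b).re < 0) ∧
      2 * ((finrank ℂ Wp : ℤ) - (finrank ℂ Wn : ℤ)) = ((p : ℤ) - q) ^ 2 + (p + q : ℤ)) ∧
    -- (c) signature on skew-symmetric matrices is `(s² − n)/2`
    (∃ Wp Wn : Submodule ℂ (Matrix (Fin (p + q)) (Fin (p + q)) ℂ),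
      (∀ b ∈ Wp, bᵀ = -b) ∧ (∀ b ∈ Wn, bᵀ = -b) ∧ Disjoint Wp Wn ∧
      (∀ b : Matrix (Fin (p + q)) (Fin (p + q)) ℂ, bᵀ = -b → b ∈ Wp ⊔ Wn) ∧
      (∀ b ∈ Wp, b ≠ 0 → 0 < (bilFormHerm p q b b).re) ∧
      (∀ b ∈ Wn, b ≠ 0 → (bilFormHerm p q b b).re < 0) ∧
      2 * ((finrank ℂ Wp : ℤ) - (finrank ℂ Wn : ℤ)) = ((p : ℤ) - q) ^ 2 - (p + q : ℤ)) := by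
    -- abbreviations
  set T : Fin (p + q) → Fin (p + q) → Prop := fun i j => ((i : ℕ) < p ↔ (j : ℕ) < p) with hT
  set NT : Fin (p + q) → Fin (p + q) → Prop := fun i j => ¬ ((i : ℕ) < p ↔ (j : ℕ) < p)
    with hNT
  set T' : Fin (p + q) → Fin (p + q) → Prop :=
    fun i j => (((i : ℕ) < p ↔ (j : ℕ) < p) ∧ i ≠ j) with hT'
  set DG : Fin (p + q) → Fin (p + q) → Prop := fun i j => i = j with hDG
  -- finrank facts
  have hfT : finrank ℂ (msupp T) = p * p + q * q := (finrank_msupp T).trans (cardT p q)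
  have hfNT : finrank ℂ (msupp NT) = 2 * (p * q) := (finrank_msupp NT).trans (cardNT p q)
  have hfDG : finrank ℂ (msupp DG) = p + q := (finrank_msupp DG).trans (cardDiag (p + q))
  have hE1 : finrank ℂ ↥(msupp T ⊓ symS (p + q)) + finrank ℂ ↥(msupp T ⊓ skewS (p + q))
      = p * p + q * q := by
    have h := Submodule.finrank_sup_add_finrank_inf_eq
      (msupp T ⊓ symS (p + q)) (msupp T ⊓ skewS (p + q))
    rw [symskew_sup (tP_symm p q), symskew_inf, finrank_bot, add_zero, hfT] at h
    exact h.symm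
  have hE2 : finrank ℂ ↥(msupp T ⊓ symS (p + q))
      = finrank ℂ ↥(msupp T' ⊓ symS (p + q)) + (p + q) := by
    have h := Submodule.finrank_sup_add_finrank_inf_eq
      (msupp T' ⊓ symS (p + q)) (msupp DG)
    rw [decomp_sup, decomp_inf, finrank_bot, add_zero, hfDG] at h
    exact h
  have hE3 : finrank ℂ ↥(msupp T ⊓ skewS (p + q)) = finrank ℂ ↥(msupp T' ⊓ skewS (p + q)) := by
    rw [skew_eq]
  have hE4 : finrank ℂ ↥(msupp T' ⊓ skewS (p + q)) = finrank ℂ ↥(msupp T' ⊓ symS (p + q)) :=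
    (twEquiv T' (tP'_nodiag p q)).finrank_eq
  have hE5 : finrank ℂ ↥(msupp NT ⊓ symS (p + q)) + finrank ℂ ↥(msupp NT ⊓ skewS (p + q))
      = 2 * (p * q) := by
    have h := Submodule.finrank_sup_add_finrank_inf_eq
      (msupp NT ⊓ symS (p + q)) (msupp NT ⊓ skewS (p + q))
    rw [symskew_sup (ntP_symm p q), symskew_inf, finrank_bot, add_zero, hfNT] at h
    exact h.symm
  have hE6 : finrank ℂ ↥(msupp NT ⊓ skewS (p + q)) = finrank ℂ ↥(msupp NT ⊓ symS (p + q)) :=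
    (twEquiv NT (ntP_nodiag p q)).finrank_eq
  have hsplitall : ∀ b : Matrix (Fin (p + q)) (Fin (p + q)) ℂ, b = eproj T b + eproj NT b := by
    intro b
    apply eproj_split
    · intro i j h; exact h.2 h.1
    · intro i j h1 h2; exact absurd h1 h2
  refine ⟨?_, ?_, ?_⟩
  · -- (a)
    refine ⟨msupp T, msupp NT, ⟨?_, ?_⟩, ?_, ?_, ?_⟩
    · rw [Submodule.disjoint_def]
      intro b h1 h2
      ext i j
      by_cases ht : T i j
      · exact h2 i j (not_not_intro ht)
      · exact h1 i j ht
    · rw [codisjoint_iff, eq_top_iff]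
      intro b _
      rw [hsplitall b]
      exact Submodule.add_mem_sup (eproj_mem _ b) (eproj_mem _ b)
    · exact fun b hb hb0 => quad_pos p q hb hb0
    · exact fun b hb hb0 => quad_neg p q hb hb0
    · rw [hfT, hfNT]
      push_cast
      ring
  · -- (b)
    refine ⟨msupp T ⊓ symS (p + q), msupp NT ⊓ symS (p + q), ?_, ?_, ?_, ?_, ?_, ?_, ?_⟩
    · exact fun b hb => (Submodule.mem_inf.1 hb).2
    · exact fun b hb => (Submodule.mem_inf.1 hb).2
    · rw [Submodule.disjoint_def]
      intro b h1 h2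
      have h1' := (Submodule.mem_inf.1 h1).1
      have h2' := (Submodule.mem_inf.1 h2).1
      ext i j
      by_cases ht : T i j
      · exact h2' i j (not_not_intro ht)
      · exact h1' i j ht
    · intro b hb
      rw [hsplitall b]
      exact Submodule.add_mem_sup
        (Submodule.mem_inf.2 ⟨eproj_mem _ b, mem_symS.2 (eproj_symm _ (tP_symm p q) b hb)⟩)
        (Submodule.mem_inf.2 ⟨eproj_mem _ b, mem_symS.2 (eproj_symm _ (ntP_symm p q) b hb)⟩)
    · exact fun b hb hb0 => quad_pos p q (Submodule.mem_inf.1 hb).1 hb0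
    · exact fun b hb hb0 => quad_neg p q (Submodule.mem_inf.1 hb).1 hb0
    · have z1 : ((finrank ℂ ↥(msupp T ⊓ symS (p + q)) : ℤ))
          + (finrank ℂ ↥(msupp T ⊓ skewS (p + q)) : ℤ) = p * p + q * q := by exact_mod_cast hE1
      have z2 : ((finrank ℂ ↥(msupp T ⊓ symS (p + q)) : ℤ))
          = (finrank ℂ ↥(msupp T' ⊓ symS (p + q)) : ℤ) + (p + q) := by exact_mod_cast hE2
      have z3 : ((finrank ℂ ↥(msupp T ⊓ skewS (p + q)) : ℤ))
          = (finrank ℂ ↥(msupp T' ⊓ skewS (p + q)) : ℤ) := by exact_mod_cast hE3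
      have z4 : ((finrank ℂ ↥(msupp T' ⊓ skewS (p + q)) : ℤ))
          = (finrank ℂ ↥(msupp T' ⊓ symS (p + q)) : ℤ) := by exact_mod_cast hE4
      have z5 : ((finrank ℂ ↥(msupp NT ⊓ symS (p + q)) : ℤ))
          + (finrank ℂ ↥(msupp NT ⊓ skewS (p + q)) : ℤ) = 2 * (p * q) := by exact_mod_cast hE5
      have z6 : ((finrank ℂ ↥(msupp NT ⊓ skewS (p + q)) : ℤ))
          = (finrank ℂ ↥(msupp NT ⊓ symS (p + q)) : ℤ) := by exact_mod_cast hE6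
      ring_nf
      ring_nf at z1 z2 z5
      linarith
  · -- (c)
    refine ⟨msupp T ⊓ skewS (p + q), msupp NT ⊓ skewS (p + q), ?_, ?_, ?_, ?_, ?_, ?_, ?_⟩
    · exact fun b hb => (Submodule.mem_inf.1 hb).2
    · exact fun b hb => (Submodule.mem_inf.1 hb).2
    · rw [Submodule.disjoint_def]
      intro b h1 h2
      have h1' := (Submodule.mem_inf.1 h1).1
      have h2' := (Submodule.mem_inf.1 h2).1
      ext i j
      by_cases ht : T i j
      · exact h2' i j (not_not_intro ht)
      · exact h1' i j ht
    · intro b hb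
      rw [hsplitall b]
      exact Submodule.add_mem_sup
        (Submodule.mem_inf.2 ⟨eproj_mem _ b, mem_skewS.2 (eproj_skew _ (tP_symm p q) b hb)⟩)
        (Submodule.mem_inf.2 ⟨eproj_mem _ b, mem_skewS.2 (eproj_skew _ (ntP_symm p q) b hb)⟩)
    · exact fun b hb hb0 => quad_pos p q (Submodule.mem_inf.1 hb).1 hb0
    · exact fun b hb hb0 => quad_neg p q (Submodule.mem_inf.1 hb).1 hb0
    · have z1 : ((finrank ℂ ↥(msupp T ⊓ symS (p + q)) : ℤ))
          + (finrank ℂ ↥(msupp T ⊓ skewS (p + q)) : ℤ) = p * p + q * q := by exact_mod_cast hE1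
      have z2 : ((finrank ℂ ↥(msupp T ⊓ symS (p + q)) : ℤ))
          = (finrank ℂ ↥(msupp T' ⊓ symS (p + q)) : ℤ) + (p + q) := by exact_mod_cast hE2
      have z3 : ((finrank ℂ ↥(msupp T ⊓ skewS (p + q)) : ℤ))
          = (finrank ℂ ↥(msupp T' ⊓ skewS (p + q)) : ℤ) := by exact_mod_cast hE3
      have z4 : ((finrank ℂ ↥(msupp T' ⊓ skewS (p + q)) : ℤ))
          = (finrank ℂ ↥(msupp T' ⊓ symS (p + q)) : ℤ) := by exact_mod_cast hE4
      have z5 : ((finrank ℂ ↥(msupp NT ⊓ symS (p + q)) : ℤ))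
          + (finrank ℂ ↥(msupp NT ⊓ skewS (p + q)) : ℤ) = 2 * (p * q) := by exact_mod_cast hE5
      have z6 : ((finrank ℂ ↥(msupp NT ⊓ skewS (p + q)) : ℤ))
          = (finrank ℂ ↥(msupp NT ⊓ symS (p + q)) : ℤ) := by exact_mod_cast hE6
      ring_nf
      ring_nf at z1 z2 z5
      linarith
end
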